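/- arXiv:1201.6330 — 3 statements merged into one kernel-verified Lean document; each statement's English description precedes it below -/
import Mathlib

section
/- Let G be a finite simple graph, C a longest cycle in G, and P a longest path in G \ C with endpoints x and y and length p ≥ 1. If x has at least 2 neighbors on C, y has at least 2 neighbors on C, and the neighborhood of x on C differs from the neighborhood of y on C, then when p = 1 the length of C is at least 3δ(G), where δ(G) is the minimum degree of G. -/
open SimpleGraph Finset

set_option linter.unusedSectionVars false
set_option maxHeartbeats 1000000

namespace Paper

variable {V : Type*}

/-- Number of connected components of `G` after deleting the vertex set `S`. -/
noncomputable def compCount (G : SimpleGraph V) (S : Set V) : ℕ :=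
  Nat.card ((G.induce Sᶜ).ConnectedComponent)

/-- `G` is 1-tough: every cutset `S` satisfies `|S| ≥ s(G \ S)`. -/
def OneTough [Fintype V] (G : SimpleGraph V) : Prop :=
  ∀ S : Finset V, 1 < compCount G ↑S → compCount G ↑S ≤ S.card

/-- The toughness of `G` equals 1. -/
def ToughnessEqOne [Fintype V] (G : SimpleGraph V) : Prop :=
  OneTough G ∧ ∃ S : Finset V, 1 < compCount G ↑S ∧ compCount G ↑S = S.card

/-- The vertex connectivity of `G` equals 2. -/
def ConnectivityEqTwo [Fintype V] (G : SimpleGraph V) : Prop :=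
  (∀ S : Finset V, S.card ≤ 1 → (G.induce (↑S : Set V)ᶜ).Connected) ∧
  ∃ S : Finset V, S.card = 2 ∧ ¬ (G.induce (↑S : Set V)ᶜ).Connected

/-- `G` is 3-connected: it stays connected after removing any 2 vertices. -/
def ThreeConnected [Fintype V] (G : SimpleGraph V) : Prop :=
  ∀ S : Finset V, S.card ≤ 2 → (G.induce (↑S : Set V)ᶜ).Connected

/-- `c` is a longest cycle of `G`. -/
def IsLongestCycle {G : SimpleGraph V} {u : V} (c : G.Walk u u) : Prop :=
  c.IsCycle ∧ ∀ (v : V) (d : G.Walk v v), d.IsCycle → d.length ≤ c.length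

/-- The cycle `c` is dominating: `G \ V(c)` is edgeless. -/
def IsDominating {G : SimpleGraph V} {u : V} (c : G.Walk u u) : Prop :=
  ∀ a b : V, G.Adj a b → a ∈ c.support ∨ b ∈ c.support

/-- The walk `p` avoids all vertices of the cycle `c`. -/
def AvoidsCycle {G : SimpleGraph V} {u x y : V} (c : G.Walk u u) (p : G.Walk x y) : Prop :=
  ∀ v ∈ p.support, v ∉ c.support

/-- `p` is a longest path of `G \ V(c)`. -/
def IsLongestPathOutside {G : SimpleGraph V} {u x y : V} (c : G.Walk u u)
    (p : G.Walk x y) : Prop :=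
  p.IsPath ∧ AvoidsCycle c p ∧
  ∀ (a b : V) (q : G.Walk a b), q.IsPath → AvoidsCycle c q → q.length ≤ p.length

/-- `N_C(x)`: the neighbors of `x` lying on the cycle `c`. -/
def NC [Fintype V] [DecidableEq V] (G : SimpleGraph V) [DecidableRel G.Adj]
    {u : V} (c : G.Walk u u) (x : V) : Finset V :=
  (G.neighborFinset x).filter (fun v => v ∈ c.support)

/-- The interior vertices of a segment (the walk minus its endpoints). -/
def interior {G : SimpleGraph V} {a b : V} (I : G.Walk a b) : Set V :=
  {v | v ∈ I.support ∧ v ≠ a ∧ v ≠ b}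

/-- `I` is an elementary segment of the cycle `c` created by the attachment set `A`:
an arc of `c` between consecutive vertices of `A`. -/
def IsSegment {G : SimpleGraph V} {u : V} (c : G.Walk u u)
    (A : Finset V) {a b : V} (I : G.Walk a b) : Prop :=
  I.IsPath ∧ 1 ≤ I.length ∧ a ∈ A ∧ b ∈ A ∧
  (∀ v ∈ I.support, v ∈ c.support) ∧
  (∀ e ∈ I.edges, e ∈ c.edges) ∧
  ∀ v ∈ interior I, v ∉ A

/-- `L` is an intermediate path between the elementary segments `Ia` and `Ib`:
it joins interior vertices of `Ia` and `Ib` and is internally disjoint from `c ∪ P`. -/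
def IsIntermediatePath {G : SimpleGraph V} {u x y : V} (c : G.Walk u u) (P : G.Walk x y)
    {a b a' b' z w : V} (Ia : G.Walk a b) (Ib : G.Walk a' b') (L : G.Walk z w) : Prop :=
  L.IsPath ∧ 1 ≤ L.length ∧ z ∈ interior Ia ∧ w ∈ interior Ib ∧
  ∀ v ∈ L.support, (v ∈ c.support ∨ v ∈ P.support) → v = z ∨ v = w

/-- Membership in the exceptional class `𝔉₁`. -/
def InF1 [Fintype V] (H : SimpleGraph V) [DecidableRel H.Adj] (d : ℕ) : Prop :=
  ∃ (x y₁ y₂ y₃ : V) (A : Fin 3 → Set V),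
    (∀ i j, i ≠ j → A i ∩ A j = {x}) ∧
    (⋃ i, A i) = Set.univ ∧
    y₁ ∈ A 0 ∧ y₂ ∈ A 1 ∧ y₃ ∈ A 2 ∧ y₁ ≠ x ∧ y₂ ≠ x ∧ y₃ ≠ x ∧
    H.Adj y₁ y₂ ∧ H.Adj y₂ y₃ ∧ H.Adj y₁ y₃ ∧
    (∀ a b : V, H.Adj a b → (∃ i, a ∈ A i ∧ b ∈ A i) ∨
      s(a, b) ∈ ({s(y₁, y₂), s(y₂, y₃), s(y₁, y₃)} : Set (Sym2 V))) ∧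
    (∀ i, (H.induce (A i)).Connected) ∧
    Nat.card (A 0) = d + 1 ∧ Nat.card (A 1) = d + 1 ∧
    d + 1 ≤ Nat.card (A 2) ∧ Nat.card (A 2) ≤ d + 2 ∧
    H.minDegree = d ∧ 3 ≤ d

/-- Membership in the exceptional class `𝔉₂`. -/
def InF2 [Fintype V] (H : SimpleGraph V) [DecidableRel H.Adj] : Prop :=
  ∃ (x z y₁ y₂ y₃ : V) (A : Fin 3 → Set V),
    (∀ i j, i ≠ j → A i ∩ A j = {x}) ∧
    ((⋃ i, A i) ∪ {z}) = Set.univ ∧ z ∉ ⋃ i, A i ∧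
    y₁ ∈ A 0 ∧ y₂ ∈ A 1 ∧ y₃ ∈ A 2 ∧ y₁ ≠ x ∧ y₂ ≠ x ∧ y₃ ≠ x ∧
    H.Adj z y₁ ∧ H.Adj z y₂ ∧ H.Adj z y₃ ∧ H.Adj y₁ y₂ ∧
    (∀ a b : V, H.Adj a b → (∃ i, a ∈ A i ∧ b ∈ A i) ∨
      s(a, b) ∈ ({s(z, y₁), s(z, y₂), s(z, y₃), s(y₁, y₂), s(y₁, y₃), s(y₂, y₃),
        s(z, x)} : Set (Sym2 V))) ∧
    (∀ i, Nat.card (A i) = 4) ∧ H.minDegree = 3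

/-- Membership in the exceptional class `𝔉₃`. -/
def InF3 [Fintype V] (H : SimpleGraph V) [DecidableRel H.Adj] : Prop :=
  ∃ (x z y₁ y₂ y₃ : V) (A : Fin 3 → Set V),
    (∀ i j, i ≠ j → A i ∩ A j = {x}) ∧
    ((⋃ i, A i) ∪ {z}) = Set.univ ∧ z ∉ ⋃ i, A i ∧
    y₁ ∈ A 0 ∧ y₂ ∈ A 1 ∧ y₃ ∈ A 2 ∧ y₁ ≠ x ∧ y₂ ≠ x ∧ y₃ ≠ x ∧
    H.Adj z y₁ ∧ H.Adj z y₂ ∧ H.Adj z y₃ ∧ H.Adj z x ∧ H.Adj y₁ y₂ ∧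
    (∀ a b : V, H.Adj a b → (∃ i, a ∈ A i ∧ b ∈ A i) ∨
      s(a, b) ∈ ({s(z, y₁), s(z, y₂), s(z, y₃), s(z, x), s(y₁, y₂), s(y₁, y₃),
        s(y₂, y₃)} : Set (Sym2 V))) ∧
    (∀ i, Nat.card (A i) = 5) ∧ H.minDegree = 4

/-- Membership in the exceptional class `𝔉₄`. -/
def InF4 [Fintype V] (H : SimpleGraph V) [DecidableRel H.Adj] : Prop :=
  ∃ (x y : V) (z : Fin 4 → V) (A : Fin 4 → Set V),
    x ≠ y ∧
    (∀ i j, i ≠ j → A i ∩ A j = {x, y}) ∧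
    (⋃ i, A i) = Set.univ ∧
    (∀ i, z i ∈ A i ∧ z i ≠ x ∧ z i ≠ y) ∧
    H.Adj (z 0) (z 1) ∧ H.Adj (z 1) (z 2) ∧ H.Adj (z 0) (z 2) ∧
    (∀ a b : V, H.Adj a b → (∃ i, a ∈ A i ∧ b ∈ A i) ∨
      s(a, b) ∈ ({s(z 0, z 1), s(z 1, z 2), s(z 0, z 2)} : Set (Sym2 V))) ∧
    (∀ i, Nat.card (A i) = 5) ∧ H.minDegree = 4

section CycleHelpers

variable [DecidableEq V] {G : SimpleGraph V}

omit [DecidableEq V] in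
lemma end_mem_support_tail {a b : V} (q : G.Walk a b) (h : ¬ q.Nil) : b ∈ q.support.tail := by
  have hlen : 0 < q.length := Walk.not_nil_iff_lt_length.mp h
  have h1 : q.support.tail ≠ [] := by
    intro he
    have := congrArg List.length he
    simp [q.length_support] at this
    exact h this
  have h2 := List.getLast_mem h1
  rwa [List.getLast_tail, q.getLast_support] at h2

lemma length_rotate {u v : V} (c : G.Walk u u) (h : v ∈ c.support) :
    (c.rotate _ h).length = c.length := by
  rw [Walk.rotate, Walk.length_append, Nat.add_comm, ← Walk.length_append, Walk.take_spec]

omit [DecidableEq V] in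
lemma mem_support_iff_mem_support_tail {v : V} (c : G.Walk v v) (h : ¬ c.Nil) {z : V} :
    z ∈ c.support ↔ z ∈ c.support.tail := by
  constructor
  · intro hz
    rw [c.support_eq_cons] at hz
    rcases List.mem_cons.mp hz with rfl | hz
    · exact end_mem_support_tail c h
    · exact hz
  · exact List.mem_of_mem_tail

lemma mem_rotate_support {u v z : V} (c : G.Walk u u) (h : v ∈ c.support) (hn : ¬ c.Nil) :
    z ∈ (c.rotate _ h).support ↔ z ∈ c.support := by
  have hn' : ¬ (c.rotate _ h).Nil := by
    rw [Walk.not_nil_iff_lt_length, length_rotate]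
    exact Walk.not_nil_iff_lt_length.mp hn
  rw [mem_support_iff_mem_support_tail _ hn', mem_support_iff_mem_support_tail _ hn,
    (Walk.support_rotate c _ h).mem_iff]

omit [DecidableEq V] in
lemma exists_dart_of_lt_length {a b : V} (p : G.Walk a b) :
    ∀ k, k < p.length → ∃ d ∈ p.darts, d.fst = p.getVert k ∧ d.snd = p.getVert (k + 1) := by
  induction p with
  | nil => intro k hk; simp at hk
  | @cons u w b hadj q ih =>
    intro k hk
    cases k with
    | zero =>
      refine ⟨⟨(u, w), hadj⟩, by simp [Walk.darts_cons], rfl, ?_⟩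
      simp [Walk.getVert_cons_succ, Walk.getVert_zero]
    | succ k =>
      obtain ⟨d, hd, h1, h2⟩ := ih k (by simpa [Walk.length_cons] using hk)
      exact ⟨d, by simp [Walk.darts_cons, hd], by simpa [Walk.getVert_cons_succ] using h1,
        by simpa [Walk.getVert_cons_succ] using h2⟩

omit [DecidableEq V] in
lemma darts_snd_nodup {u : V} {c : G.Walk u u} (hc : c.IsCycle) :
    (c.darts.map (·.snd)).Nodup := by
  rw [Walk.map_snd_darts]; exact hc.support_nodup

omit [DecidableEq V] in
lemma darts_fst_nodup {u : V} {c : G.Walk u u} (hc : c.IsCycle) :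
    (c.darts.map (·.fst)).Nodup := by
  rw [Walk.map_fst_darts]
  have hn : ¬ c.Nil := hc.not_nil
  have htail : c.support.tail ≠ [] := by
    intro he
    have h2 := end_mem_support_tail c hn
    rw [he] at h2
    simp at h2
  rw [c.support_eq_cons, List.dropLast_cons_of_ne_nil htail]
  refine List.nodup_cons.mpr ⟨?_, hc.support_nodup.sublist (List.dropLast_sublist _)⟩
  intro hu
  have h1 : c.support.tail.getLast htail = u := by
    rw [List.getLast_tail, c.getLast_support]
  have h2 := hc.support_nodup
  conv at h2 => rw [← List.dropLast_append_getLast htail, h1]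
  rw [List.nodup_append] at h2
  exact h2.2.2 u hu u (List.mem_singleton_self u) rfl

omit [DecidableEq V] in
lemma mem_support_of_mem_edges' {a b z : V} {p : G.Walk a b} {e : Sym2 V}
    (he : e ∈ p.edges) (hz : z ∈ e) : z ∈ p.support := by
  induction e with
  | _ s t =>
    rcases Sym2.mem_iff.mp hz with rfl | rfl
    · exact Walk.fst_mem_support_of_mem_edges p he
    · exact Walk.snd_mem_support_of_mem_edges p he

/-- The successor of a vertex along a closed walk. -/
def csucc {u : V} (c : G.Walk u u) (v : V) : V :=
  if h : v ∈ c.support then (c.rotate _ h).getVert 1 else v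

lemma csucc_dart {u v : V} {c : G.Walk u u} (hc : c.IsCycle) (hv : v ∈ c.support) :
    ∃ d ∈ c.darts, d.fst = v ∧ d.snd = csucc c v := by
  rw [csucc, dif_pos hv]
  have h3 := hc.three_le_length
  have hn : 0 < (c.rotate _ hv).length := by rw [length_rotate]; omega
  obtain ⟨d, hd, h1, h2⟩ := exists_dart_of_lt_length (c.rotate _ hv) 0 hn
  exact ⟨d, (Walk.rotate_darts c _ hv).mem_iff.mp hd, by simpa using h1, h2⟩

lemma csucc_eq_of_dart {u : V} {c : G.Walk u u} (hc : c.IsCycle) {d : G.Dart}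
    (hd : d ∈ c.darts) : csucc c d.fst = d.snd := by
  obtain ⟨d', hd', h1, h2⟩ := csucc_dart hc (Walk.dart_fst_mem_support_of_mem_darts _ hd)
  have : d' = d := List.inj_on_of_nodup_map (darts_fst_nodup hc) hd' hd h1
  rw [← h2, this]

lemma csucc_adj {u v : V} {c : G.Walk u u} (hc : c.IsCycle) (hv : v ∈ c.support) :
    G.Adj v (csucc c v) := by
  obtain ⟨d, hd, h1, h2⟩ := csucc_dart hc hv
  have := d.adj
  rwa [h1, h2] at this

lemma csucc_mem_support {u v : V} {c : G.Walk u u} (hc : c.IsCycle) (hv : v ∈ c.support) :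
    csucc c v ∈ c.support := by
  obtain ⟨d, hd, h1, h2⟩ := csucc_dart hc hv
  rw [← h2]
  exact Walk.dart_snd_mem_support_of_mem_darts _ hd

lemma csucc_injOn {u : V} {c : G.Walk u u} (hc : c.IsCycle) {v w : V}
    (hv : v ∈ c.support) (hw : w ∈ c.support) (h : csucc c v = csucc c w) : v = w := by
  obtain ⟨d1, hd1, e1, e2⟩ := csucc_dart hc hv
  obtain ⟨d2, hd2, f1, f2⟩ := csucc_dart hc hw
  have : d1 = d2 := List.inj_on_of_nodup_map (darts_snd_nodup hc) hd1 hd2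
    (by rw [e2, f2, h])
  rw [← e1, ← f1, this]

lemma csucc_csucc_ne {u v : V} {c : G.Walk u u} (hc : c.IsCycle) (hv : v ∈ c.support) :
    csucc c (csucc c v) ≠ v := by
  intro h
  obtain ⟨d1, hd1, e1, e2⟩ := csucc_dart hc hv
  obtain ⟨d2, hd2, f1, f2⟩ := csucc_dart hc (csucc_mem_support hc hv)
  have hvs : v ≠ csucc c v := (csucc_adj hc hv).ne
  have hedge : d1.edge = d2.edge := by
    have h1 : d1.edge = s(v, csucc c v) := by rw [← e2, ← e1]; rfl
    have h2 : d2.edge = s(csucc c v, v) := by rw [h] at f2; rw [← f1, ← f2]; rfl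
    rw [h1, h2, Sym2.eq_swap]
  have heq : d1 = d2 :=
    List.inj_on_of_nodup_map (show (c.darts.map Dart.edge).Nodup from hc.isTrail.edges_nodup)
      hd1 hd2 hedge
  rw [heq, f1] at e1
  exact hvs e1.symm

lemma csucc_getVert {u : V} {c : G.Walk u u} (hc : c.IsCycle) {k : ℕ} (hk : k < c.length) :
    csucc c (c.getVert k) = c.getVert (k + 1) := by
  obtain ⟨d, hd, h1, h2⟩ := exists_dart_of_lt_length c k hk
  rw [← h1, ← h2]
  exact csucc_eq_of_dart hc hd

lemma csucc_iterate {u : V} {c : G.Walk u u} (hc : c.IsCycle) :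
    ∀ k, k ≤ c.length → (csucc c)^[k] u = c.getVert k := by
  intro k
  induction k with
  | zero => simp
  | succ k ih =>
    intro hk
    rw [Function.iterate_succ_apply', ih (by omega), csucc_getVert hc (by omega)]

lemma csucc_reach {u w : V} {c : G.Walk u u} (hc : c.IsCycle) (hw : w ∈ c.support) :
    ∃ k ≤ c.length, (csucc c)^[k] u = w := by
  obtain ⟨i, hgv, hi⟩ := Walk.mem_support_iff_exists_getVert.mp hw
  exact ⟨i, hi, by rw [csucc_iterate hc i hi, hgv]⟩

lemma csucc_closure {u : V} {c : G.Walk u u} (hc : c.IsCycle) (X : Finset V)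
    (hne : X.Nonempty) (hsub : ∀ v ∈ X, v ∈ c.support)
    (hcl : ∀ v ∈ X, csucc c (csucc c v) ∈ X) {w : V} (hw : w ∈ c.support) :
    w ∈ X ∨ ∃ v ∈ X, w = csucc c v := by
  obtain ⟨v₀, hv₀⟩ := hne
  have key : ∀ m (z : V), (z ∈ X ∨ ∃ v ∈ X, z = csucc c v) →
      ((csucc c)^[m] z ∈ X ∨ ∃ v ∈ X, (csucc c)^[m] z = csucc c v) := by
    intro m
    induction m with
    | zero => simp
    | succ m ih =>
      intro z hz
      rw [Function.iterate_succ_apply']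
      rcases ih z hz with h | ⟨v, hv, he⟩
      · exact Or.inr ⟨_, h, rfl⟩
      · rw [he]
        exact Or.inl (hcl v hv)
  obtain ⟨k, hk, hkv⟩ := csucc_reach hc (hsub v₀ hv₀)
  have hcyc : (csucc c)^[c.length] u = u := by
    rw [csucc_iterate hc c.length le_rfl, Walk.getVert_length]
  have hu : (csucc c)^[c.length - k] v₀ = u := by
    rw [← hkv, ← Function.iterate_add_apply, Nat.sub_add_cancel hk, hcyc]
  obtain ⟨m, hmw, hm⟩ := Walk.mem_support_iff_exists_getVert.mp hw
  have hfin : (csucc c)^[m + (c.length - k)] v₀ = w := by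
    rw [Function.iterate_add_apply, hu, csucc_iterate hc m hm, hmw]
  have := key (m + (c.length - k)) v₀ (Or.inl hv₀)
  rwa [hfin] at this

omit [DecidableEq V] in
/-- Replacing a subpath of a cycle by a strictly longer internally-disjoint path
contradicts maximality of the cycle. -/
lemma cycle_replace {v w : V} {c : G.Walk v v} (hc : c.IsCycle)
    (hmax : ∀ (a : V) (d : G.Walk a a), d.IsCycle → d.length ≤ c.length)
    {m : ℕ} (q : G.Walk w v)
    (hsub : ∀ z ∈ q.support, z ∈ c.support)
    (hnodup : q.support.Nodup) (hedge : q.edges.Nodup)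
    (hqlen : q.length + m = c.length)
    (R : G.Walk v w) (hR : R.IsPath) (hRlen : m < R.length)
    (hint : ∀ z ∈ R.support, z ≠ v → z ≠ w → z ∉ c.support)
    (hRe : ∀ e ∈ R.edges, e ∉ q.edges) : False := by
  have hRpos : 0 < R.length := by omega
  set W := R.append q with hW
  have hWcyc : W.IsCycle := by
    rw [Walk.isCycle_def]
    refine ⟨?_, ?_, ?_⟩
    · rw [Walk.isTrail_def, hW, Walk.edges_append, List.nodup_append]
      exact ⟨hR.isTrail.edges_nodup, hedge, fun e he b hb heq => hRe e he (heq ▸ hb)⟩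
    · intro h
      have := congrArg Walk.length h
      rw [hW, Walk.length_append, Walk.length_nil] at this
      omega
    · rw [hW, Walk.tail_support_append, List.nodup_append]
      refine ⟨hR.support_nodup.tail, hnodup.tail, ?_⟩
      intro z hz1 z' hz2 hzz
      rw [← hzz] at hz2
      have hzv : z ≠ v := by
        intro h
        subst h
        have := hR.support_nodup
        rw [R.support_eq_cons] at this
        exact (List.nodup_cons.mp this).1 hz1
      have hzw : z ≠ w := by
        intro h
        subst h
        rw [q.support_eq_cons] at hnodup
        exact (List.nodup_cons.mp hnodup).1 hz2
      exact hint z (List.mem_of_mem_tail hz1) hzv hzw (hsub z (List.mem_of_mem_tail hz2))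
  have hWlen : W.length = R.length + q.length := by rw [hW, Walk.length_append]
  have := hmax v W hWcyc
  omega

lemma surg_aux {u v : V} {c : G.Walk u u} (hc : c.IsCycle) (hv : v ∈ c.support) :
    ¬ (c.rotate _ hv).Nil ∧ (c.rotate _ hv).length = c.length ∧
      csucc c v = (c.rotate _ hv).getVert 1 := by
  have h3 := hc.three_le_length
  refine ⟨?_, length_rotate c hv, ?_⟩
  · rw [Walk.not_nil_iff_lt_length, length_rotate]
    omega
  · rw [csucc, dif_pos hv]

/-- Generic surgery replacing one edge `v–(csucc v)` of the cycle by a path `R`. -/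
lemma surg_m1 {u v : V} {c : G.Walk u u} (hc : c.IsCycle)
    (hmax : ∀ (a : V) (d : G.Walk a a), d.IsCycle → d.length ≤ c.length)
    (hv : v ∈ c.support)
    (R : G.Walk v (csucc c v)) (hR : R.IsPath) (hRlen : 1 < R.length)
    (hint : ∀ z ∈ R.support, z ≠ v → z ≠ csucc c v → z ∉ c.support)
    (hRx : ∀ e ∈ R.edges, ∃ z, z ∈ e ∧ z ∉ c.support) : False := by
  obtain ⟨hn', hlen', hw⟩ := surg_aux hc hv
  set c' := c.rotate _ hv with hc'def
  have hcyc' : c'.IsCycle := hc.rotate hv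
  have hn : ¬ c.Nil := hc.not_nil
  have hmem : ∀ t : V, t ∈ c'.support ↔ t ∈ c.support := fun t => mem_rotate_support c hv hn
  have hq := c'.cons_tail_eq hn'
  set q := c'.tail with hqdef
  have hsupq : q.support = c'.support.tail := Walk.support_tail_of_not_nil c' hn'
  have hedgeq : q.edges.Nodup := by
    have h2 := hcyc'.isTrail.edges_nodup
    rw [← hq, Walk.edges_cons] at h2
    exact h2.of_cons
  refine cycle_replace hcyc' (fun a d hd => by rw [hlen']; exact hmax a d hd) (m := 1) q
    ?_ ?_ hedgeq ?_ (R.copy rfl hw) ((Walk.isPath_copy R rfl hw).mpr hR)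
    (by rwa [Walk.length_copy]) ?_ ?_
  · intro z hz
    rw [hsupq] at hz
    exact List.mem_of_mem_tail hz
  · rw [hsupq]; exact hcyc'.support_nodup
  · rw [hqdef, Walk.length_tail_add_one hn', hlen']
  · intro z hz h1 h2
    rw [Walk.support_copy] at hz
    rw [hmem]
    exact hint z hz h1 (by rwa [hw])
  · intro e he heq
    rw [Walk.edges_copy] at he
    obtain ⟨z, hze, hzc⟩ := hRx e he
    have hzq : z ∈ q.support := mem_support_of_mem_edges' heq hze
    rw [hsupq] at hzq
    exact hzc ((hmem z).mp (List.mem_of_mem_tail hzq))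

/-- Generic surgery replacing the two edges `v–σv–σ²v` of the cycle by a path `R`. -/
lemma surg_m2 {u v : V} {c : G.Walk u u} (hc : c.IsCycle)
    (hmax : ∀ (a : V) (d : G.Walk a a), d.IsCycle → d.length ≤ c.length)
    (hv : v ∈ c.support)
    (R : G.Walk v (csucc c (csucc c v))) (hR : R.IsPath) (hRlen : 2 < R.length)
    (hint : ∀ z ∈ R.support, z ≠ v → z ≠ csucc c (csucc c v) → z ∉ c.support)
    (hRx : ∀ e ∈ R.edges, ∃ z, z ∈ e ∧ z ∉ c.support) : False := by
  obtain ⟨hn', hlen', hw⟩ := surg_aux hc hv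
  have h3 := hc.three_le_length
  set c' := c.rotate _ hv with hc'def
  have hcyc' : c'.IsCycle := hc.rotate hv
  have hn : ¬ c.Nil := hc.not_nil
  have hmem : ∀ t : V, t ∈ c'.support ↔ t ∈ c.support := fun t => mem_rotate_support c hv hn
  have hw2 : csucc c (csucc c v) = c'.getVert 2 := by
    obtain ⟨d, hd, h1, h2⟩ := exists_dart_of_lt_length c' 1 (by omega)
    have := csucc_eq_of_dart hc ((Walk.rotate_darts c _ hv).mem_iff.mp hd)
    rw [h1, h2, ← hw] at this
    exact this
  have hq1 := c'.cons_tail_eq hn'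
  set t := c'.tail with htdef
  have hlent : t.length + 1 = c'.length := Walk.length_tail_add_one hn'
  have htn : ¬ t.Nil := by rw [Walk.not_nil_iff_lt_length]; omega
  have hq2 := t.cons_tail_eq htn
  set q := t.tail with hqdef
  have hsupt : t.support = c'.support.tail := Walk.support_tail_of_not_nil c' hn'
  have hsupq : q.support = t.support.tail := Walk.support_tail_of_not_nil t htn
  have hlenq : q.length + 1 = t.length := Walk.length_tail_add_one htn
  have hwq : t.getVert 1 = c'.getVert 2 := Walk.getVert_tail (n := 1) c'
  have hedgeq : q.edges.Nodup := by
    have h2 := hcyc'.isTrail.edges_nodup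
    rw [← hq1, Walk.edges_cons] at h2
    have h4 := h2.of_cons
    rw [← hq2, Walk.edges_cons] at h4
    exact h4.of_cons
  have hnodupt : t.support.Nodup := by rw [hsupt]; exact hcyc'.support_nodup
  refine cycle_replace hcyc' (fun a d hd => by rw [hlen']; exact hmax a d hd) (m := 2) q
    ?_ ?_ hedgeq ?_ (R.copy rfl (hw2.trans hwq.symm))
    ((Walk.isPath_copy R rfl _).mpr hR) (by rwa [Walk.length_copy]) ?_ ?_
  · intro z hz
    rw [hsupq] at hz
    have : z ∈ t.support := List.mem_of_mem_tail hz
    rw [hsupt] at this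
    exact List.mem_of_mem_tail this
  · rw [hsupq]; exact hnodupt.tail
  · omega
  · intro z hz h1 h2
    rw [Walk.support_copy] at hz
    rw [hmem]
    refine hint z hz h1 ?_
    rw [hw2, ← hwq]
    exact h2
  · intro e he heq
    rw [Walk.edges_copy] at he
    obtain ⟨z, hze, hzc⟩ := hRx e he
    have hzq : z ∈ q.support := mem_support_of_mem_edges' heq hze
    rw [hsupq] at hzq
    have : z ∈ t.support := List.mem_of_mem_tail hzq
    rw [hsupt] at this
    exact hzc ((hmem z).mp (List.mem_of_mem_tail this))

end CycleHelpers


theorem stmt_0 [Fintype V] [DecidableEq V] (G : SimpleGraph V) [DecidableRel G.Adj]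
    {u x y : V} (c : G.Walk u u) (P : G.Walk x y)
    (hc : IsLongestCycle c) (hP : IsLongestPathOutside c P)
    (hp : P.length = 1)
    (hx : 2 ≤ (NC G c x).card) (hy : 2 ≤ (NC G c y).card)
    (hne : NC G c x ≠ NC G c y) :
    3 * G.minDegree ≤ c.length := by
  classical
  obtain ⟨hcyc, hmax⟩ := hc
  obtain ⟨hPpath, hPavoid, hPmax⟩ := hP
  have hn3 : 3 ≤ c.length := hcyc.three_le_length
  have hxc : x ∉ c.support := hPavoid x P.start_mem_support
  have hyc : y ∉ c.support := hPavoid y P.end_mem_support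
  have hxy : G.Adj x y := by
    have h2 := P.adj_getVert_succ (i := 0) (by omega)
    rw [P.getVert_zero] at h2
    rwa [show (0 + 1 : ℕ) = P.length by omega, P.getVert_length] at h2
  have hxyne : x ≠ y := hxy.ne
  -- surgeries
  have mkA : ∀ z v : V, z ∉ c.support → v ∈ c.support → G.Adj z v →
      G.Adj z (csucc c v) → False := by
    intro z v hz hv h1 h2
    have hvs : v ≠ csucc c v := (csucc_adj hcyc hv).ne
    have hzs : z ≠ csucc c v := fun h => hz (h ▸ csucc_mem_support hcyc hv)
    have hvz : v ≠ z := fun h => hz (h ▸ hv)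
    refine surg_m1 hcyc hmax hv (Walk.cons h1.symm (Walk.cons h2 Walk.nil)) ?_ (by simp) ?_ ?_
    · refine Walk.IsPath.cons (Walk.IsPath.cons Walk.IsPath.nil ?_) ?_
      · simpa using hzs
      · simp only [Walk.support_cons, Walk.support_nil, List.mem_cons,
          List.not_mem_nil, or_false, List.mem_singleton]
        push_neg
        exact ⟨hvz, hvs⟩
    · intro w hw hw1 hw2
      simp only [Walk.support_cons, Walk.support_nil, List.mem_cons,
        List.not_mem_nil, or_false, List.mem_singleton] at hw
      rcases hw with rfl | rfl | rfl
      · exact absurd rfl hw1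
      · exact hz
      · exact absurd rfl hw2
    · intro e he
      simp only [Walk.edges_cons, Walk.edges_nil, List.mem_cons, List.not_mem_nil,
        or_false, List.mem_singleton] at he
      rcases he with rfl | rfl
      · exact ⟨z, by simp, hz⟩
      · exact ⟨z, by simp, hz⟩
  have mkB : ∀ z₁ z₂ v : V, z₁ ∉ c.support → z₂ ∉ c.support → G.Adj z₁ z₂ →
      v ∈ c.support → G.Adj z₁ v → G.Adj z₂ (csucc c v) → False := by
    intro z₁ z₂ v hz1 hz2 hzz hv h1 h2
    have hvs : v ≠ csucc c v := (csucc_adj hcyc hv).ne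
    have hsupp : csucc c v ∈ c.support := csucc_mem_support hcyc hv
    refine surg_m1 hcyc hmax hv
      (Walk.cons h1.symm (Walk.cons hzz (Walk.cons h2 Walk.nil))) ?_ (by simp) ?_ ?_
    · refine Walk.IsPath.cons (Walk.IsPath.cons (Walk.IsPath.cons Walk.IsPath.nil ?_) ?_) ?_
      · intro hmem
        rw [Walk.support_nil, List.mem_singleton] at hmem
        exact hz2 (hmem ▸ hsupp)
      · simp only [Walk.support_cons, Walk.support_nil, List.mem_cons,
          List.not_mem_nil, or_false, List.mem_singleton]
        push_neg
        exact ⟨hzz.ne, fun h => hz1 (h ▸ hsupp)⟩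
      · simp only [Walk.support_cons, Walk.support_nil, List.mem_cons,
          List.not_mem_nil, or_false, List.mem_singleton]
        push_neg
        exact ⟨fun h => hz1 (h ▸ hv), fun h => hz2 (h ▸ hv), hvs⟩
    · intro w hw hw1 hw2
      simp only [Walk.support_cons, Walk.support_nil, List.mem_cons,
        List.not_mem_nil, or_false, List.mem_singleton] at hw
      rcases hw with rfl | rfl | rfl | rfl
      · exact absurd rfl hw1
      · exact hz1
      · exact hz2
      · exact absurd rfl hw2
    · intro e he
      simp only [Walk.edges_cons, Walk.edges_nil, List.mem_cons, List.not_mem_nil,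
        or_false, List.mem_singleton] at he
      rcases he with rfl | rfl | rfl
      · exact ⟨z₁, by simp, hz1⟩
      · exact ⟨z₁, by simp, hz1⟩
      · exact ⟨z₂, by simp, hz2⟩
  have mkC : ∀ z₁ z₂ v : V, z₁ ∉ c.support → z₂ ∉ c.support → G.Adj z₁ z₂ →
      v ∈ c.support → G.Adj z₁ v → G.Adj z₂ (csucc c (csucc c v)) → False := by
    intro z₁ z₂ v hz1 hz2 hzz hv h1 h2
    have hsupp1 : csucc c v ∈ c.support := csucc_mem_support hcyc hv
    have hsupp : csucc c (csucc c v) ∈ c.support := csucc_mem_support hcyc hsupp1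
    have hvs : v ≠ csucc c (csucc c v) := fun h => (csucc_csucc_ne hcyc hv) h.symm
    refine surg_m2 hcyc hmax hv
      (Walk.cons h1.symm (Walk.cons hzz (Walk.cons h2 Walk.nil))) ?_ (by simp) ?_ ?_
    · refine Walk.IsPath.cons (Walk.IsPath.cons (Walk.IsPath.cons Walk.IsPath.nil ?_) ?_) ?_
      · intro hmem
        rw [Walk.support_nil, List.mem_singleton] at hmem
        exact hz2 (hmem ▸ hsupp)
      · simp only [Walk.support_cons, Walk.support_nil, List.mem_cons,
          List.not_mem_nil, or_false, List.mem_singleton]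
        push_neg
        exact ⟨hzz.ne, fun h => hz1 (h ▸ hsupp)⟩
      · simp only [Walk.support_cons, Walk.support_nil, List.mem_cons,
          List.not_mem_nil, or_false, List.mem_singleton]
        push_neg
        exact ⟨fun h => hz1 (h ▸ hv), fun h => hz2 (h ▸ hv), hvs⟩
    · intro w hw hw1 hw2
      simp only [Walk.support_cons, Walk.support_nil, List.mem_cons,
        List.not_mem_nil, or_false, List.mem_singleton] at hw
      rcases hw with rfl | rfl | rfl | rfl
      · exact absurd rfl hw1
      · exact hz1
      · exact hz2
      · exact absurd rfl hw2
    · intro e he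
      simp only [Walk.edges_cons, Walk.edges_nil, List.mem_cons, List.not_mem_nil,
        or_false, List.mem_singleton] at he
      rcases he with rfl | rfl | rfl
      · exact ⟨z₁, by simp, hz1⟩
      · exact ⟨z₁, by simp, hz1⟩
      · exact ⟨z₂, by simp, hz2⟩
  -- membership in NC
  have hmemA : ∀ v, v ∈ NC G c x ↔ G.Adj x v ∧ v ∈ c.support := by
    intro v
    simp [NC, mem_filter, mem_neighborFinset]
  have hmemB : ∀ v, v ∈ NC G c y ↔ G.Adj y v ∧ v ∈ c.support := by
    intro v
    simp [NC, mem_filter, mem_neighborFinset]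
  set S := NC G c x ∪ NC G c y with hS
  have hSsub : ∀ v ∈ S, v ∈ c.support := by
    intro v hv
    rw [hS, mem_union] at hv
    rcases hv with hv | hv
    · exact ((hmemA v).mp hv).2
    · exact ((hmemB v).mp hv).2
  have hdisj : ∀ v ∈ S, csucc c v ∉ S := by
    intro v hv hsv
    rw [hS, mem_union] at hv hsv
    rw [hmemA, hmemB] at hv hsv
    rcases hv with ⟨h1, hvc⟩ | ⟨h1, hvc⟩ <;> rcases hsv with ⟨h2, -⟩ | ⟨h2, -⟩
    · exact mkA x v hxc hvc h1 h2
    · exact mkB x y v hxc hyc hxy hvc h1 h2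
    · exact mkB y x v hyc hxc hxy.symm hvc h1 h2
    · exact mkA y v hyc hvc h1 h2
  have hcross1 : ∀ v, v ∈ NC G c x → csucc c (csucc c v) ∈ NC G c y → False := by
    intro v hv h2
    rw [hmemA] at hv
    rw [hmemB] at h2
    exact mkC x y v hxc hyc hxy hv.2 hv.1 h2.1
  have hcross2 : ∀ v, v ∈ NC G c y → csucc c (csucc c v) ∈ NC G c x → False := by
    intro v hv h2
    rw [hmemB] at hv
    rw [hmemA] at h2
    exact mkC y x v hyc hxc hxy.symm hv.2 hv.1 h2.1
  -- degree bounds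
  have hdegA : G.minDegree ≤ (NC G c x).card + 1 := by
    have hsub : G.neighborFinset x ⊆ insert y (NC G c x) := by
      intro z hz
      rw [mem_neighborFinset] at hz
      by_cases hzc : z ∈ c.support
      · exact mem_insert_of_mem ((hmemA z).mpr ⟨hz, hzc⟩)
      rcases eq_or_ne z y with rfl | hzy
      · exact mem_insert_self _ _
      exfalso
      have hQpath : (Walk.cons hz.symm (Walk.cons hxy Walk.nil) : G.Walk z y).IsPath := by
        refine Walk.IsPath.cons (Walk.IsPath.cons Walk.IsPath.nil ?_) ?_
        · simpa using hxyne
        · simp only [Walk.support_cons, Walk.support_nil, List.mem_cons,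
            List.not_mem_nil, or_false, List.mem_singleton]
          push_neg
          exact ⟨hz.ne', hzy⟩
      have hQavoid : AvoidsCycle c (Walk.cons hz.symm (Walk.cons hxy Walk.nil) : G.Walk z y) := by
        intro w hw
        simp only [Walk.support_cons, Walk.support_nil, List.mem_cons,
          List.not_mem_nil, or_false, List.mem_singleton] at hw
        rcases hw with rfl | rfl | rfl
        · exact hzc
        · exact hxc
        · exact hyc
      have := hPmax z y _ hQpath hQavoid
      rw [hp] at this
      simp at this
    calc G.minDegree ≤ G.degree x := G.minDegree_le_degree x
      _ = (G.neighborFinset x).card := rfl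
      _ ≤ (insert y (NC G c x)).card := card_le_card hsub
      _ ≤ (NC G c x).card + 1 := card_insert_le _ _
  have hdegB : G.minDegree ≤ (NC G c y).card + 1 := by
    have hsub : G.neighborFinset y ⊆ insert x (NC G c y) := by
      intro z hz
      rw [mem_neighborFinset] at hz
      by_cases hzc : z ∈ c.support
      · exact mem_insert_of_mem ((hmemB z).mpr ⟨hz, hzc⟩)
      rcases eq_or_ne z x with rfl | hzy
      · exact mem_insert_self _ _
      exfalso
      have hQpath : (Walk.cons hz.symm (Walk.cons hxy.symm Walk.nil) : G.Walk z x).IsPath := by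
        refine Walk.IsPath.cons (Walk.IsPath.cons Walk.IsPath.nil ?_) ?_
        · simpa using hxyne.symm
        · simp only [Walk.support_cons, Walk.support_nil, List.mem_cons,
            List.not_mem_nil, or_false, List.mem_singleton]
          push_neg
          exact ⟨hz.ne', hzy⟩
      have hQavoid : AvoidsCycle c (Walk.cons hz.symm (Walk.cons hxy.symm Walk.nil) : G.Walk z x) := by
        intro w hw
        simp only [Walk.support_cons, Walk.support_nil, List.mem_cons,
          List.not_mem_nil, or_false, List.mem_singleton] at hw
        rcases hw with rfl | rfl | rfl
        · exact hzc
        · exact hyc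
        · exact hxc
      have := hPmax z x _ hQpath hQavoid
      rw [hp] at this
      simp at this
    calc G.minDegree ≤ G.degree y := G.minDegree_le_degree y
      _ = (G.neighborFinset y).card := rfl
      _ ≤ (insert x (NC G c y)).card := card_le_card hsub
      _ ≤ (NC G c y).card + 1 := card_insert_le _ _
  -- cardinality of the cycle support
  have husupp : u ∈ c.support.tail := end_mem_support_tail c hcyc.not_nil
  have hsuppcard : c.support.toFinset.card = c.length := by
    rw [c.support_eq_cons, List.toFinset_cons, insert_eq_self.mpr (List.mem_toFinset.mpr husupp),
      List.toFinset_card_of_nodup hcyc.support_nodup, List.length_tail, c.length_support]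
    omega
  -- main count
  set K := S.filter (fun v => csucc c (csucc c v) ∈ S) with hK
  set T := S \ K with hT
  have hKsub : K ⊆ S := filter_subset _ _
  have hTdef : ∀ v ∈ T, csucc c (csucc c v) ∉ S := by
    intro v hv h2
    rw [hT, mem_sdiff, hK] at hv
    exact hv.2 (mem_filter.mpr ⟨hv.1, h2⟩)
  have hTsub : T ⊆ S := sdiff_subset
  have hcard1 : (S.image (csucc c)).card = S.card :=
    card_image_of_injOn (fun v hv w hw h => csucc_injOn hcyc (hSsub v hv) (hSsub w hw) h)
  have hcard2 : (T.image (fun v => csucc c (csucc c v))).card = T.card :=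
    card_image_of_injOn (fun v hv w hw h =>
      csucc_injOn hcyc (hSsub v (hTsub hv)) (hSsub w (hTsub hw))
        (csucc_injOn hcyc (csucc_mem_support hcyc (hSsub v (hTsub hv)))
          (csucc_mem_support hcyc (hSsub w (hTsub hw))) h))
  have hd1 : Disjoint S (S.image (csucc c)) := by
    rw [disjoint_right]
    intro w hw hwS
    obtain ⟨v, hv, rfl⟩ := mem_image.mp hw
    exact hdisj v hv hwS
  have hd2 : Disjoint S (T.image (fun v => csucc c (csucc c v))) := by
    rw [disjoint_right]
    intro w hw hwS
    obtain ⟨v, hv, rfl⟩ := mem_image.mp hw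
    exact hTdef v hv hwS
  have hd3 : Disjoint (S.image (csucc c)) (T.image (fun v => csucc c (csucc c v))) := by
    rw [Finset.disjoint_left]
    intro w hw hw2
    obtain ⟨v1, hv1, rfl⟩ := mem_image.mp hw
    obtain ⟨v2, hv2, he⟩ := mem_image.mp hw2
    have : csucc c v2 = v1 :=
      csucc_injOn hcyc (csucc_mem_support hcyc (hSsub v2 (hTsub hv2))) (hSsub v1 hv1) he
    exact hdisj v2 (hTsub hv2) (this ▸ hv1)
  have hunion : S ∪ S.image (csucc c) ∪ T.image (fun v => csucc c (csucc c v)) ⊆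
      c.support.toFinset := by
    intro w hw
    rw [mem_union, mem_union] at hw
    rw [List.mem_toFinset]
    rcases hw with (hw | hw) | hw
    · exact hSsub w hw
    · obtain ⟨v, hv, rfl⟩ := mem_image.mp hw
      exact csucc_mem_support hcyc (hSsub v hv)
    · obtain ⟨v, hv, rfl⟩ := mem_image.mp hw
      exact csucc_mem_support hcyc (csucc_mem_support hcyc (hSsub v (hTsub hv)))
  have hcount : 2 * S.card + T.card ≤ c.length := by
    have h1 := card_le_card hunion
    rw [hsuppcard, card_union_of_disjoint (disjoint_union_left.mpr ⟨hd2, hd3⟩),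
      card_union_of_disjoint hd1, hcard1, hcard2] at h1
    omega
  have hKT : K.card + T.card = S.card := by
    have h1 := card_le_card hKsub
    rw [hT, card_sdiff_of_subset hKsub]
    omega
  -- splitting K
  set Ka := (NC G c x \ NC G c y).filter
    (fun v => csucc c (csucc c v) ∈ NC G c x \ NC G c y) with hKa
  set Kb := (NC G c y \ NC G c x).filter
    (fun v => csucc c (csucc c v) ∈ NC G c y \ NC G c x) with hKb
  have hKsplit : K ⊆ Ka ∪ Kb := by
    intro v hv
    rw [hK, mem_filter] at hv
    obtain ⟨hvS, hvs⟩ := hv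
    rw [hS, mem_union] at hvS hvs
    rw [mem_union, hKa, hKb, mem_filter, mem_filter]
    by_cases hvA : v ∈ NC G c x
    · have h2A : csucc c (csucc c v) ∈ NC G c x := by
        rcases hvs with h | h
        · exact h
        · exact absurd h (fun hh => hcross1 v hvA hh)
      have h2B : csucc c (csucc c v) ∉ NC G c y := fun hh => hcross1 v hvA hh
      have hvB : v ∉ NC G c y := fun hh => hcross2 v hh h2A
      exact Or.inl ⟨mem_sdiff.mpr ⟨hvA, hvB⟩, mem_sdiff.mpr ⟨h2A, h2B⟩⟩
    · have hvB : v ∈ NC G c y := by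
        rcases hvS with h | h
        · exact absurd h hvA
        · exact h
      have h2B : csucc c (csucc c v) ∈ NC G c y := by
        rcases hvs with h | h
        · exact absurd h (fun hh => hcross2 v hvB hh)
        · exact h
      have h2A : csucc c (csucc c v) ∉ NC G c x := fun hh => hcross2 v hvB hh
      exact Or.inr ⟨mem_sdiff.mpr ⟨hvB, hvA⟩, mem_sdiff.mpr ⟨h2B, h2A⟩⟩
  have hKcard : K.card ≤ Ka.card + Kb.card :=
    le_trans (card_le_card hKsplit) (card_union_le _ _)
  -- closure bounds
  have hclA : 1 ≤ (NC G c x \ NC G c y).card → Ka.card + 1 ≤ (NC G c x \ NC G c y).card := by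
    intro ha
    by_contra hcon
    push_neg at hcon
    have hle : (NC G c x \ NC G c y).card ≤ Ka.card := by omega
    have hKaeq : Ka = NC G c x \ NC G c y :=
      eq_of_subset_of_card_le (filter_subset _ _) hle
    have hclosed : ∀ v ∈ NC G c x \ NC G c y,
        csucc c (csucc c v) ∈ NC G c x \ NC G c y := by
      intro v hv
      rw [← hKaeq, hKa, mem_filter] at hv
      exact hv.2
    obtain ⟨w, hwB⟩ := card_pos.mp (show 0 < (NC G c y).card by omega)
    have hwc : w ∈ c.support := ((hmemB w).mp hwB).2
    have hsubA : ∀ v ∈ NC G c x \ NC G c y, v ∈ c.support := fun v hv =>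
      ((hmemA v).mp (mem_sdiff.mp hv).1).2
    rcases csucc_closure hcyc _ (card_pos.mp (by omega)) hsubA hclosed hwc with
      hmem1 | ⟨v, hvX, rfl⟩
    · exact (mem_sdiff.mp hmem1).2 hwB
    · exact hdisj v (mem_union_left _ (mem_sdiff.mp hvX).1) (mem_union_right _ hwB)
  have hclB : 1 ≤ (NC G c y \ NC G c x).card → Kb.card + 1 ≤ (NC G c y \ NC G c x).card := by
    intro ha
    by_contra hcon
    push_neg at hcon
    have hle : (NC G c y \ NC G c x).card ≤ Kb.card := by omega
    have hKbeq : Kb = NC G c y \ NC G c x :=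
      eq_of_subset_of_card_le (filter_subset _ _) hle
    have hclosed : ∀ v ∈ NC G c y \ NC G c x,
        csucc c (csucc c v) ∈ NC G c y \ NC G c x := by
      intro v hv
      rw [← hKbeq, hKb, mem_filter] at hv
      exact hv.2
    obtain ⟨w, hwA⟩ := card_pos.mp (show 0 < (NC G c x).card by omega)
    have hwc : w ∈ c.support := ((hmemA w).mp hwA).2
    have hsubB : ∀ v ∈ NC G c y \ NC G c x, v ∈ c.support := fun v hv =>
      ((hmemB v).mp (mem_sdiff.mp hv).1).2
    rcases csucc_closure hcyc _ (card_pos.mp (by omega)) hsubB hclosed hwc with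
      hmem1 | ⟨v, hvX, rfl⟩
    · exact (mem_sdiff.mp hmem1).2 hwA
    · exact hdisj v (mem_union_right _ (mem_sdiff.mp hvX).1) (mem_union_left _ hwA)
  -- arithmetic
  have haA := card_sdiff_add_card_inter (NC G c x) (NC G c y)
  have haB := card_sdiff_add_card_inter (NC G c y) (NC G c x)
  have hswap : (NC G c y ∩ NC G c x).card = (NC G c x ∩ NC G c y).card := by
    rw [inter_comm]
  have hUcard : S.card + (NC G c x ∩ NC G c y).card =
      (NC G c x).card + (NC G c y).card := by
    rw [hS]
    exact card_union_add_card_inter _ _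
  have hone : 1 ≤ (NC G c x \ NC G c y).card + (NC G c y \ NC G c x).card := by
    by_contra hcon
    push_neg at hcon
    have e1 : NC G c x \ NC G c y = ∅ := card_eq_zero.mp (by omega)
    have e2 : NC G c y \ NC G c x = ∅ := card_eq_zero.mp (by omega)
    exact hne (Finset.Subset.antisymm (sdiff_eq_empty_iff_subset.mp e1)
      (sdiff_eq_empty_iff_subset.mp e2))
  have hKaLe : Ka.card ≤ (NC G c x \ NC G c y).card := card_le_card (filter_subset _ _)
  have hKbLe : Kb.card ≤ (NC G c y \ NC G c x).card := card_le_card (filter_subset _ _)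
  have hKa' : Ka.card + 1 ≤ (NC G c x \ NC G c y).card ∨
      (Ka.card = 0 ∧ (NC G c x \ NC G c y).card = 0) := by
    rcases Nat.eq_zero_or_pos (NC G c x \ NC G c y).card with h0 | h1
    · exact Or.inr ⟨by omega, h0⟩
    · exact Or.inl (hclA h1)
  have hKb' : Kb.card + 1 ≤ (NC G c y \ NC G c x).card ∨
      (Kb.card = 0 ∧ (NC G c y \ NC G c x).card = 0) := by
    rcases Nat.eq_zero_or_pos (NC G c y \ NC G c x).card with h0 | h1
    · exact Or.inr ⟨by omega, h0⟩
    · exact Or.inl (hclB h1)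
  rcases hKa' with h | h <;> rcases hKb' with h' | h' <;> omega


end Paper
end

section
/- Let G be a finite simple graph, C a longest cycle in G, and P a longest path in G \ C with endpoints x and y and length p ≥ 1. Suppose |N_C(x)| ≥ 2, |N_C(y)| ≥ 2 and N_C(x) ≠ N_C(y). If p = 1, then |C| ≥ 3δ(G) + max{σ₁, σ₂} − 1, where σ₁ = |N_C(x) \ N_C(y)| and σ₂ = |N_C(y) \ N_C(x)|. -/
open SimpleGraph Finset

namespace Paper

variable {V : Type*}

-- Auxiliary lemmas
lemma zval_sub_nat {n : ℕ} [NeZero n] {z : ZMod n} {k : ℕ} (hk : k ≤ z.val) :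
    (z - (k : ZMod n)).val = z.val - k := by
  have h1 : ((z.val - k : ℕ) : ZMod n) = z - k := by
    push_cast [Nat.cast_sub hk]
    rw [ZMod.natCast_val, ZMod.cast_id]
  rw [← h1, ZMod.val_cast_of_lt (lt_of_le_of_lt (Nat.sub_le _ _) z.val_lt)]

lemma ztrans {n : ℕ} [NeZero n] {S X Y : Finset (ZMod n)}
    (hS : ∀ i, i ∈ S ↔ i ∈ X ∨ i ∈ Y)
    (d : ZMod n → ℕ)
    (hd_pos : ∀ i, 0 < d i)
    (hd_mem : ∀ i, i + (d i : ZMod n) ∈ S)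
    (hd_le : ∀ i, ∀ j ∈ S, j ≠ i → d i ≤ (j - i).val)
    (hX : (X \ Y).Nonempty) (hY : Y.Nonempty) :
    ∃ i ∈ X \ Y, i + (d i : ZMod n) ∈ Y := by
  obtain ⟨j, hj⟩ := hY
  obtain ⟨i0, hi0⟩ := hX
  suffices h : ∀ N : ℕ, ∀ i ∈ X \ Y, (j - i).val ≤ N → ∃ i' ∈ X \ Y, i' + (d i' : ZMod n) ∈ Y by
    exact h _ i0 hi0 le_rfl
  intro N
  induction N with
  | zero =>
    intro i hi hval
    have h0 : j - i = 0 := (ZMod.val_eq_zero (j - i)).mp (Nat.le_zero.mp hval)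
    have : j = i := sub_eq_zero.mp h0
    exact absurd hj (by rw [this] at hj; exact absurd hj (Finset.mem_sdiff.mp hi).2)
  | succ N ih =>
    intro i hi hval
    rcases Finset.mem_sdiff.mp hi with ⟨hiX, hiY⟩
    set q := i + (d i : ZMod n) with hq
    by_cases hqY : q ∈ Y
    · exact ⟨i, hi, hqY⟩
    · have hqS : q ∈ S := hd_mem i
      have hqX : q ∈ X \ Y := Finset.mem_sdiff.mpr ⟨((hS q).mp hqS).resolve_right hqY, hqY⟩
      have hji : j ≠ i := fun h => hiY (h ▸ hj)
      have hd_le_i : d i ≤ (j - i).val := hd_le i j ((hS j).mpr (Or.inr hj)) hji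
      have hsub : (j - q).val = (j - i).val - d i := by
        have : j - q = (j - i) - (d i : ZMod n) := by ring
        rw [this, zval_sub_nat hd_le_i]
      apply ih q hqX
      have := hd_pos i
      omega

lemma zcount {n : ℕ} [NeZero n] (SA SB : Finset (ZMod n))
    (h1 : ∀ i ∈ SA ∪ SB, i + 1 ∉ SA ∪ SB)
    (h2 : ∀ i ∈ SA, i + 2 ∉ SB) (h2' : ∀ i ∈ SB, i + 2 ∉ SA)
    (hA : SA.Nonempty) (hB : SB.Nonempty) :
    2 * (SA ∪ SB).card + (SA ∩ SB).card
      + (if (SA \ SB).Nonempty then 1 else 0)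
      + (if (SB \ SA).Nonempty then 1 else 0) ≤ n := by
  classical
  set S := SA ∪ SB with hSdef
  have hSne : S.Nonempty := hA.mono Finset.subset_union_left
  have hSiff : ∀ i, i ∈ S ↔ i ∈ SA ∨ i ∈ SB := fun i => Finset.mem_union
  have exS : ∀ i : ZMod n, ∃ k : ℕ, 0 < k ∧ i + (k : ZMod n) ∈ S := by
    intro i
    obtain ⟨s, hs⟩ := hSne
    refine ⟨(s - i - 1).val + 1, Nat.succ_pos _, ?_⟩
    have : (((s - i - 1).val + 1 : ℕ) : ZMod n) = s - i := by
      push_cast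
      rw [ZMod.natCast_val, ZMod.cast_id]; ring
    rw [this]; simpa using hs
  set d : ZMod n → ℕ := fun i => Nat.find (exS i) with hd
  have hd_pos : ∀ i, 0 < d i := fun i => (Nat.find_spec (exS i)).1
  have hd_mem : ∀ i, i + (d i : ZMod n) ∈ S := fun i => (Nat.find_spec (exS i)).2
  have hd_min : ∀ i (k : ℕ), 0 < k → i + (k : ZMod n) ∈ S → d i ≤ k := by
    intro i k hk hmem
    exact Nat.find_le ⟨hk, hmem⟩
  have hd_le : ∀ i, ∀ j ∈ S, j ≠ i → d i ≤ (j - i).val := by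
    intro i j hjS hji
    have hval : 0 < (j - i).val := by
      rcases Nat.eq_zero_or_pos (j - i).val with h | h
      · exact absurd (sub_eq_zero.mp ((ZMod.val_eq_zero _).mp h)) hji
      · exact h
    apply hd_min i _ hval
    have : (((j - i).val : ℕ) : ZMod n) = j - i := by
      rw [ZMod.natCast_val, ZMod.cast_id]
    rw [this]; simpa using hjS
  have hd2 : ∀ i ∈ S, 2 ≤ d i := by
    intro i hiS
    by_contra h
    have h1' : d i = 1 := by have := hd_pos i; omega
    have := hd_mem i
    rw [h1'] at this
    exact h1 i hiS (by simpa using this)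
  set T1 : Finset (ZMod n) := (SA \ SB).filter (fun i => i + (d i : ZMod n) ∈ SB) with hT1
  set T2 : Finset (ZMod n) := (SB \ SA).filter (fun i => i + (d i : ZMod n) ∈ SA) with hT2
  set E : Finset (ZMod n) := (SA ∩ SB) ∪ T1 ∪ T2 with hE
  have hES : E ⊆ S := by
    intro i hi
    simp only [hE, Finset.mem_union, hT1, hT2, Finset.mem_filter, Finset.mem_inter,
      Finset.mem_sdiff] at hi
    rcases hi with (⟨h, _⟩ | ⟨⟨h, _⟩, _⟩) | ⟨⟨h, _⟩, _⟩
    · exact (hSiff _).mpr (Or.inl h)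
    · exact (hSiff _).mpr (Or.inl h)
    · exact (hSiff _).mpr (Or.inr h)
  have hE2 : ∀ i ∈ E, i + 2 ∉ S := by
    intro i hi hi2
    have hdi2 : d i = 2 := by
      have hle : d i ≤ 2 := hd_min i 2 (by norm_num) (by push_cast; simpa using hi2)
      have := hd2 i (hES hi)
      omega
    simp only [hE, Finset.mem_union, hT1, hT2, Finset.mem_filter, Finset.mem_inter,
      Finset.mem_sdiff] at hi
    rcases hi with (⟨hA', hB'⟩ | ⟨⟨hA', hB'⟩, hnx⟩) | ⟨⟨hB', hA'⟩, hnx⟩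
    · rcases (hSiff _).mp hi2 with h | h
      · exact h2' i hB' h
      · exact h2 i hA' h
    · rw [hdi2] at hnx; push_cast at hnx
      exact h2 i hA' hnx
    · rw [hdi2] at hnx; push_cast at hnx
      exact h2' i hB' hnx
  set W : Finset (ZMod n) := S ∪ S.image (· + 1) ∪ E.image (· + 2) with hW
  have hdisj1 : Disjoint S (S.image (· + 1)) := by
    rw [Finset.disjoint_right]
    intro j hj hjS
    obtain ⟨i, hiS, rfl⟩ := Finset.mem_image.mp hj
    exact h1 i hiS hjS
  have hdisj2 : Disjoint (S ∪ S.image (· + 1)) (E.image (· + 2)) := by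
    rw [Finset.disjoint_right]
    intro j hj hjU
    obtain ⟨i, hiE, rfl⟩ := Finset.mem_image.mp hj
    rcases Finset.mem_union.mp hjU with h | h
    · exact hE2 i hiE h
    · obtain ⟨k, hkS, hk⟩ := Finset.mem_image.mp h
      have hki : k = i + 1 := by
        have h' : k + 1 = i + 2 := hk
        have : k + 1 = (i + 1) + 1 := by rw [h']; ring
        exact add_right_cancel this
      subst hki
      exact h1 i (hES hiE) hkS
  have hinj1 : Function.Injective (fun z : ZMod n => z + 1) := add_left_injective 1
  have hinj2 : Function.Injective (fun z : ZMod n => z + 2) := add_left_injective 2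
  have hWcard : W.card = S.card + S.card + E.card := by
    rw [hW, Finset.card_union_of_disjoint hdisj2, Finset.card_union_of_disjoint hdisj1,
      Finset.card_image_of_injective _ hinj1, Finset.card_image_of_injective _ hinj2]
  have hWn : W.card ≤ n := by
    have := Finset.card_le_univ W
    simpa [ZMod.card] using this
  have hdisjE1 : Disjoint (SA ∩ SB) T1 := by
    rw [Finset.disjoint_right]
    intro i hi1 hi2
    have := (Finset.mem_sdiff.mp (Finset.mem_filter.mp hi1).1).2
    exact this (Finset.mem_inter.mp hi2).2
  have hdisjE2 : Disjoint ((SA ∩ SB) ∪ T1) T2 := by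
    rw [Finset.disjoint_right]
    intro i hi1 hi2
    have hiB : i ∈ SB \ SA := (Finset.mem_filter.mp hi1).1
    rcases Finset.mem_union.mp hi2 with h | h
    · exact (Finset.mem_sdiff.mp hiB).2 (Finset.mem_inter.mp h).1
    · exact (Finset.mem_sdiff.mp hiB).2 (Finset.mem_sdiff.mp (Finset.mem_filter.mp h).1).1
  have hEcard : E.card = (SA ∩ SB).card + T1.card + T2.card := by
    rw [hE, Finset.card_union_of_disjoint hdisjE2, Finset.card_union_of_disjoint hdisjE1]
  have hT1ne : (SA \ SB).Nonempty → 1 ≤ T1.card := by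
    intro h
    obtain ⟨i, hi, hnx⟩ := ztrans hSiff d hd_pos hd_mem hd_le h hB
    exact Finset.card_pos.mpr ⟨i, Finset.mem_filter.mpr ⟨hi, hnx⟩⟩
  have hT2ne : (SB \ SA).Nonempty → 1 ≤ T2.card := by
    intro h
    obtain ⟨i, hi, hnx⟩ := ztrans (fun i => by rw [hSiff]; tauto) d hd_pos hd_mem hd_le h hA
    exact Finset.card_pos.mpr ⟨i, Finset.mem_filter.mpr ⟨hi, hnx⟩⟩
  split_ifs with hab hba hba
  · have := hT1ne hab
    have := hT2ne hba
    omega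
  · have := hT1ne hab
    omega
  · have := hT2ne hba
    omega
  · omega

lemma support_eq_map_getVert {G : SimpleGraph V} {u v : V} (p : G.Walk u v) :
    p.support = (List.range (p.length + 1)).map p.getVert := by
  induction p with
  | nil => simp [Walk.getVert]
  | @cons a b c h q ih =>
    rw [Walk.support_cons, Walk.length_cons, List.range_succ_eq_map, List.map_cons]
    congr 1
    · rw [ih, List.map_map]
      congr 1

def arcW {n : ℕ} (G : SimpleGraph V) (f : ZMod n → V)
    (hadj : ∀ i, G.Adj (f i) (f (i + 1))) : (j : ZMod n) → (k : ℕ) → G.Walk (f j) (f (j + k))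
  | j, 0 => Walk.nil.copy rfl (by simp)
  | j, (k + 1) =>
      ((arcW G f hadj (j + 1) k).cons (hadj j)).copy rfl (by push_cast; ring_nf)

@[simp] lemma arcW_length {n : ℕ} (G : SimpleGraph V) (f : ZMod n → V)
    (hadj : ∀ i, G.Adj (f i) (f (i + 1))) (j : ZMod n) (k : ℕ) :
    (arcW G f hadj j k).length = k := by
  induction k generalizing j with
  | zero => simp [arcW]
  | succ k ih => simp [arcW, ih]

lemma arcW_support {n : ℕ} (G : SimpleGraph V) (f : ZMod n → V)
    (hadj : ∀ i, G.Adj (f i) (f (i + 1))) (j : ZMod n) (k : ℕ) :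
    (arcW G f hadj j k).support = (List.range (k + 1)).map (fun s : ℕ => f (j + (s : ℕ))) := by
  induction k generalizing j with
  | zero =>
    simp [arcW, List.range_succ]
  | succ k ih =>
    rw [arcW, Walk.support_copy, Walk.support_cons, ih]
    conv_rhs => rw [List.range_succ_eq_map, List.map_cons, List.map_map]
    congr 1
    · simp
    apply List.map_congr_left
    intro s _
    simp only [Function.comp_apply]
    congr 1
    push_cast
    ring

lemma surgery {G : SimpleGraph V} {u : V} {c : G.Walk u u}
    (hc : IsLongestCycle c) {n : ℕ} (hn : n = c.length)
    (f : ZMod n → V) (hadj : ∀ i, G.Adj (f i) (f (i + 1)))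
    (hmem : ∀ i, f i ∈ c.support) (hinj : Function.Injective f)
    (i : ZMod n) (t : ℕ) (ht1 : 1 ≤ t) (htn : t < n)
    {z w : V} (Q : G.Walk z w) (hQ : Q.IsPath)
    (hQav : ∀ v ∈ Q.support, v ∉ c.support)
    (hz : G.Adj (f i) z) (hw : G.Adj w (f (i + (t : ℕ)))) :
    Q.length + 2 ≤ t := by
  haveI : NeZero n := ⟨by omega⟩
  have hcast : f (i + (t : ℕ) + ((n - t : ℕ) : ZMod n)) = f i := by
    congr 1
    have h1 : ((t : ℕ) : ZMod n) + ((n - t : ℕ) : ZMod n) = ((n : ℕ) : ZMod n) := by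
      rw [← Nat.cast_add]
      congr 1
      omega
    rw [add_assoc, h1, ZMod.natCast_self, add_zero]
  set R : G.Walk (f (i + (t : ℕ))) (f i) :=
    (arcW G f hadj (i + (t : ℕ)) (n - t)).copy rfl hcast with hR
  have hRsupp : R.support = (List.range (n - t + 1)).map (fun s : ℕ => f (i + (t : ℕ) + (s : ℕ))) := by
    rw [hR, Walk.support_copy, arcW_support]
  have hRlen : R.length = n - t := by rw [hR, Walk.length_copy, arcW_length]
  have hRmemC : ∀ v ∈ R.support, v ∈ c.support := by
    intro v hv
    rw [hRsupp] at hv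
    obtain ⟨s, _, rfl⟩ := List.mem_map.mp hv
    exact hmem _
  have hRnodup : R.support.Nodup := by
    rw [hRsupp]
    refine List.Nodup.map_on ?_ List.nodup_range
    intro s1 hs1 s2 hs2 heq
    rw [List.mem_range] at hs1 hs2
    have h1 : i + (t : ℕ) + ((s1 : ℕ) : ZMod n) = i + (t : ℕ) + ((s2 : ℕ) : ZMod n) := hinj heq
    have h2 : ((s1 : ℕ) : ZMod n) = ((s2 : ℕ) : ZMod n) := add_left_cancel h1
    have := congrArg ZMod.val h2
    rwa [ZMod.val_cast_of_lt (by omega), ZMod.val_cast_of_lt (by omega)] at this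
  set inner : G.Walk z (f i) := Q.append (Walk.cons hw R) with hinner
  have hinner_supp : inner.support = Q.support ++ R.support := by
    rw [hinner, Walk.support_append, Walk.support_cons, List.tail_cons]
  have hinner_path : inner.IsPath := by
    rw [Walk.isPath_def, hinner_supp, List.nodup_append]
    refine ⟨hQ.support_nodup, hRnodup, ?_⟩
    intro v hv v' hv' heq
    subst heq
    exact hQav v hv (hRmemC v hv')
  have hfiC : f i ∈ c.support := hmem i
  have hedge : s(f i, z) ∉ inner.edges := by
    rw [hinner, Walk.edges_append, Walk.edges_cons]
    intro hmem'
    rcases List.mem_append.mp hmem' with h | h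
    · exact hQav (f i) (Walk.fst_mem_support_of_mem_edges Q h) hfiC
    · rcases List.mem_cons.mp h with h | h
      · rw [Sym2.eq_iff] at h
        rcases h with ⟨h1, h2⟩ | ⟨h1, h2⟩
        · exact hQav w (Walk.end_mem_support Q) (h1 ▸ hfiC)
        · have : i = i + (t : ℕ) := hinj h1
          have h0 : ((t : ℕ) : ZMod n) = 0 := by
            have h' : i + (0 : ZMod n) = i + ((t : ℕ) : ZMod n) := by
              rw [add_zero]; exact this
            exact (add_left_cancel h').symm
          have := congrArg ZMod.val h0
          rw [ZMod.val_cast_of_lt htn, ZMod.val_zero] at this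
          omega
      · have : z ∈ R.support := Walk.snd_mem_support_of_mem_edges R h
        exact hQav z (Walk.start_mem_support Q) (hRmemC z this)
  set cycC : G.Walk (f i) (f i) := Walk.cons hz inner with hcyc
  have hcycle : cycC.IsCycle := (Walk.cons_isCycle_iff inner hz).mpr ⟨hinner_path, hedge⟩
  have hlen : cycC.length = Q.length + (n - t) + 2 := by
    rw [hcyc, Walk.length_cons, hinner, Walk.length_append, Walk.length_cons, hRlen]
    omega
  have := hc.2 (f i) cycC hcycle
  rw [hlen, ← hn] at this
  omega

theorem stmt_2 [Fintype V] [DecidableEq V] (G : SimpleGraph V) [DecidableRel G.Adj]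
    {u x y : V} (c : G.Walk u u) (P : G.Walk x y)
    (hc : IsLongestCycle c) (hP : IsLongestPathOutside c P)
    (hp : P.length = 1)
    (hx : 2 ≤ (NC G c x).card) (hy : 2 ≤ (NC G c y).card)
    (hne : NC G c x ≠ NC G c y) :
    3 * G.minDegree +
      max ((NC G c x \ NC G c y).card) ((NC G c y \ NC G c x).card) - 1 ≤ c.length := by
  classical
  have hcyc := hc.1
  set n := c.length with hn
  have hn3 : 3 ≤ n := hcyc.three_le_length
  haveI : NeZero n := ⟨by omega⟩
  set f : ZMod n → V := fun i => c.getVert i.val with hf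
  -- basic facts about f
  have hf_mem : ∀ i : ZMod n, f i ∈ c.support := by
    intro i
    rw [Walk.mem_support_iff_exists_getVert]
    exact ⟨i.val, rfl, le_of_lt (by rw [← hn]; exact i.val_lt)⟩
  have hf_surj : ∀ v ∈ c.support, ∃ i : ZMod n, f i = v := by
    intro v hv
    obtain ⟨k, hk, hkle⟩ := Walk.mem_support_iff_exists_getVert.mp hv
    rcases eq_or_lt_of_le hkle with h | h
    · refine ⟨0, ?_⟩
      rw [hf]
      simp only [ZMod.val_zero, Walk.getVert_zero]
      rw [← hk, h, Walk.getVert_length]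
    · exact ⟨(k : ZMod n), by rw [hf]; simp only; rw [ZMod.val_cast_of_lt h]; exact hk⟩
  have hf_adj : ∀ i : ZMod n, G.Adj (f i) (f (i + 1)) := by
    intro i
    have hival : i.val < n := i.val_lt
    have hval1 : (i + 1).val = (i.val + 1) % n := by
      have : i + 1 = ((i.val + 1 : ℕ) : ZMod n) := by
        push_cast
        rw [ZMod.natCast_val, ZMod.cast_id]
      rw [this, ZMod.val_natCast]
    by_cases h : i.val + 1 < n
    · have : (i + 1).val = i.val + 1 := by rw [hval1, Nat.mod_eq_of_lt h]
      rw [hf]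
      simp only
      rw [this]
      exact c.adj_getVert_succ (by omega)
    · have hival' : i.val = n - 1 := by omega
      have hz0 : (i + 1).val = 0 := by
        rw [hval1, hival', show n - 1 + 1 = n from by omega, Nat.mod_self]
      have h2 : G.Adj (c.getVert (n - 1)) (c.getVert n) := by
        have := c.adj_getVert_succ (i := n - 1) (show n - 1 < c.length from by omega)
        rwa [show n - 1 + 1 = n from by omega] at this
      have e1 : c.getVert n = c.getVert 0 := by
        rw [Walk.getVert_zero]
        exact Walk.getVert_length c
      rw [hf]
      simp only
      rw [hz0, hival', ← e1]
      exact h2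
  have hf_inj : Function.Injective f := by
    have htail : c.support.tail = (List.range n).map (fun k => c.getVert (k + 1)) := by
      rw [support_eq_map_getVert c, ← hn, List.range_succ_eq_map, List.map_cons, List.tail_cons,
        List.map_map]
      rfl
    have hnodup : ((List.range n).map (fun k => c.getVert (k + 1))).Nodup := by
      rw [← htail]; exact hcyc.support_nodup
    have hinj : ∀ a ∈ List.range n, ∀ b ∈ List.range n,
        c.getVert (a + 1) = c.getVert (b + 1) → a = b :=
      List.inj_on_of_nodup_map hnodup
    have key : ∀ i : ZMod n, ∃ a, a < n ∧ c.getVert (a + 1) = f i ∧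
        (a + 1 = i.val ∨ (i.val = 0 ∧ a + 1 = n)) := by
      intro i
      rcases Nat.eq_zero_or_pos i.val with h0 | h0
      · refine ⟨n - 1, by omega, ?_, Or.inr ⟨h0, by omega⟩⟩
        rw [show n - 1 + 1 = n from by omega, hf]
        simp only
        rw [h0, Walk.getVert_zero, hn, Walk.getVert_length]
      · exact ⟨i.val - 1, by have := i.val_lt; omega, by rw [hf]; simp only; congr 1; omega,
          Or.inl (by omega)⟩
    intro i j hij
    obtain ⟨a, ha, hga, hcase⟩ := key i
    obtain ⟨b, hb, hgb, hcase'⟩ := key j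
    have hab : a = b := by
      apply hinj a (List.mem_range.mpr ha) b (List.mem_range.mpr hb)
      rw [hga, hgb, hij]
    have hvi : i.val = j.val := by
      have := i.val_lt; have := j.val_lt
      omega
    have : (i.val : ZMod n) = (j.val : ZMod n) := by rw [hvi]
    rwa [ZMod.natCast_val, ZMod.cast_id, ZMod.natCast_val, ZMod.cast_id] at this
  -- facts about P
  have hxy : G.Adj x y := Walk.adj_of_length_eq_one hp
  have hPav : ∀ v ∈ P.support, v ∉ c.support := hP.2.1
  have hxC : x ∉ c.support := hPav x (Walk.start_mem_support P)
  have hyC : y ∉ c.support := hPav y (Walk.end_mem_support P)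
  have hPsupp : P.support = [x, y] := by
    rw [support_eq_map_getVert P, hp]
    rw [show List.range 2 = [0, 1] from rfl]
    simp only [List.map_cons, List.map_nil, Walk.getVert_zero]
    have h1' : P.getVert 1 = y := by
      rw [← hp]
      exact Walk.getVert_length P
    rw [h1']
  -- membership into NC
  have hmemA : ∀ v, v ∈ NC G c x ↔ G.Adj x v ∧ v ∈ c.support := by
    intro v
    rw [NC, Finset.mem_filter, mem_neighborFinset]
  have hmemB : ∀ v, v ∈ NC G c y ↔ G.Adj y v ∧ v ∈ c.support := by
    intro v
    rw [NC, Finset.mem_filter, mem_neighborFinset]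
  set A := NC G c x with hA
  set B := NC G c y with hB
  -- index sets
  set SA : Finset (ZMod n) := univ.filter (fun i => f i ∈ A) with hSA
  set SB : Finset (ZMod n) := univ.filter (fun i => f i ∈ B) with hSB
  have card_pre : ∀ T : Finset V, (∀ v ∈ T, v ∈ c.support) →
      (univ.filter (fun i => f i ∈ T)).card = T.card := by
    intro T hT
    apply Finset.card_bij (fun i _ => f i)
    · intro i hi
      exact (Finset.mem_filter.mp hi).2
    · intro i hi j hj hij
      exact hf_inj hij
    · intro v hv
      obtain ⟨i, rfl⟩ := hf_surj v (hT v hv)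
      exact ⟨i, Finset.mem_filter.mpr ⟨Finset.mem_univ _, hv⟩, rfl⟩
  have hAsub : ∀ v ∈ A, v ∈ c.support := fun v hv => ((hmemA v).mp hv).2
  have hBsub : ∀ v ∈ B, v ∈ c.support := fun v hv => ((hmemB v).mp hv).2
  have hSAcard : SA.card = A.card := card_pre A hAsub
  have hSBcard : SB.card = B.card := card_pre B hBsub
  have hU : SA ∪ SB = univ.filter (fun i => f i ∈ A ∪ B) := by
    ext i
    simp [hSA, hSB, Finset.mem_filter, Finset.mem_union]
  have hI : SA ∩ SB = univ.filter (fun i => f i ∈ A ∩ B) := by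
    ext i
    simp [hSA, hSB, Finset.mem_filter, Finset.mem_inter]
  have hDab : SA \ SB = univ.filter (fun i => f i ∈ A \ B) := by
    ext i
    simp [hSA, hSB, Finset.mem_filter, Finset.mem_sdiff]
  have hDba : SB \ SA = univ.filter (fun i => f i ∈ B \ A) := by
    ext i
    simp [hSA, hSB, Finset.mem_filter, Finset.mem_sdiff]
  have hUcard : (SA ∪ SB).card = (A ∪ B).card := by
    rw [hU]; exact card_pre _ (fun v hv => by
      rcases Finset.mem_union.mp hv with h | h
      exacts [hAsub v h, hBsub v h])
  have hIcard : (SA ∩ SB).card = (A ∩ B).card := by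
    rw [hI]; exact card_pre _ (fun v hv => hAsub v (Finset.mem_inter.mp hv).1)
  have hDabcard : (SA \ SB).card = (A \ B).card := by
    rw [hDab]; exact card_pre _ (fun v hv => hAsub v (Finset.mem_sdiff.mp hv).1)
  have hDbacard : (SB \ SA).card = (B \ A).card := by
    rw [hDba]; exact card_pre _ (fun v hv => hBsub v (Finset.mem_sdiff.mp hv).1)
  -- surgery hypotheses
  have hadjA : ∀ i : ZMod n, f i ∈ A → G.Adj (f i) x := fun i hi => ((hmemA _).mp hi).1.symm
  have hadjB : ∀ i : ZMod n, f i ∈ B → G.Adj (f i) y := fun i hi => ((hmemB _).mp hi).1.symm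
  have hone : ((1 : ℕ) : ZMod n) = 1 := Nat.cast_one
  have htwo : ((2 : ℕ) : ZMod n) = 2 := by push_cast; rfl
  have hQnilx : ∀ v ∈ (Walk.nil : G.Walk x x).support, v ∉ c.support := by
    intro v hv
    simp only [Walk.support_nil, List.mem_singleton] at hv
    rwa [hv]
  have hQnily : ∀ v ∈ (Walk.nil : G.Walk y y).support, v ∉ c.support := by
    intro v hv
    simp only [Walk.support_nil, List.mem_singleton] at hv
    rwa [hv]
  have hPrev_path : P.reverse.IsPath := hP.1.reverse
  have hPrev_av : ∀ v ∈ P.reverse.support, v ∉ c.support := by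
    intro v hv
    exact hPav v (by rwa [Walk.support_reverse, List.mem_reverse] at hv)
  have h1 : ∀ i ∈ SA ∪ SB, i + 1 ∉ SA ∪ SB := by
    intro i hi hi1
    have h1lt : 1 < n := by omega
    rw [Finset.mem_union, hSA, hSB, Finset.mem_filter, Finset.mem_filter] at hi hi1
    rcases hi with ⟨_, hiA⟩ | ⟨_, hiB⟩ <;> rcases hi1 with ⟨_, hi1A⟩ | ⟨_, hi1B⟩
    · have := surgery hc hn f hf_adj hf_mem hf_inj i 1 le_rfl h1lt
        (Walk.nil : G.Walk x x) Walk.IsPath.nil hQnilx (hadjA i hiA)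
        (by rw [hone]; exact (hadjA _ hi1A).symm)
      simpa using this
    · have := surgery hc hn f hf_adj hf_mem hf_inj i 1 le_rfl h1lt
        P hP.1 hPav (hadjA i hiA)
        (by rw [hone]; exact (hadjB _ hi1B).symm)
      rw [hp] at this
      omega
    · have := surgery hc hn f hf_adj hf_mem hf_inj i 1 le_rfl h1lt
        P.reverse hPrev_path hPrev_av (hadjB i hiB)
        (by rw [hone]; exact (hadjA _ hi1A).symm)
      rw [Walk.length_reverse, hp] at this
      omega
    · have := surgery hc hn f hf_adj hf_mem hf_inj i 1 le_rfl h1lt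
        (Walk.nil : G.Walk y y) Walk.IsPath.nil hQnily (hadjB i hiB)
        (by rw [hone]; exact (hadjB _ hi1B).symm)
      simpa using this
  have h2 : ∀ i ∈ SA, i + 2 ∉ SB := by
    intro i hi hi2
    rw [hSA, Finset.mem_filter] at hi
    rw [hSB, Finset.mem_filter] at hi2
    have := surgery hc hn f hf_adj hf_mem hf_inj i 2 (by omega) (by omega)
      P hP.1 hPav (hadjA i hi.2)
      (by rw [htwo]; exact (hadjB _ hi2.2).symm)
    rw [hp] at this
    omega
  have h2' : ∀ i ∈ SB, i + 2 ∉ SA := by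
    intro i hi hi2
    rw [hSB, Finset.mem_filter] at hi
    rw [hSA, Finset.mem_filter] at hi2
    have := surgery hc hn f hf_adj hf_mem hf_inj i 2 (by omega) (by omega)
      P.reverse hPrev_path hPrev_av (hadjB i hi.2)
      (by rw [htwo]; exact (hadjA _ hi2.2).symm)
    rw [Walk.length_reverse, hp] at this
    omega
  have hSAne : SA.Nonempty := by
    rw [← Finset.card_pos, hSAcard]; omega
  have hSBne : SB.Nonempty := by
    rw [← Finset.card_pos, hSBcard]; omega
  have hcount := zcount SA SB h1 h2 h2' hSAne hSBne
  -- degree bounds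
  have hxyne : x ≠ y := hxy.ne
  have hdegx : G.minDegree ≤ A.card + 1 := by
    have h1' : G.minDegree ≤ G.degree x := G.minDegree_le_degree x
    have h2'' : G.neighborFinset x ⊆ insert y A := by
      intro w hw
      rw [mem_neighborFinset] at hw
      by_cases hwc : w ∈ c.support
      · exact Finset.mem_insert.mpr (Or.inr ((hmemA w).mpr ⟨hw, hwc⟩))
      · by_cases hwy : w = y
        · exact Finset.mem_insert.mpr (Or.inl hwy)
        · exfalso
          have hQ2 : (Walk.cons hw.symm P).IsPath := by
            rw [Walk.isPath_def, Walk.support_cons, hPsupp]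
            simp only [List.nodup_cons, List.mem_cons, List.mem_singleton, List.not_mem_nil]
            refine ⟨by push_neg; exact ⟨hw.ne', hwy, trivial⟩, by simp [hxyne]⟩
          have hQ2av : ∀ v ∈ (Walk.cons hw.symm P).support, v ∉ c.support := by
            intro v hv
            rw [Walk.support_cons] at hv
            rcases List.mem_cons.mp hv with rfl | hv
            · exact hwc
            · exact hPav v hv
          have := hP.2.2 w y (Walk.cons hw.symm P) hQ2 hQ2av
          rw [Walk.length_cons, hp] at this
          omega
    calc G.minDegree ≤ G.degree x := h1'
      _ = (G.neighborFinset x).card := rfl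
      _ ≤ (insert y A).card := Finset.card_le_card h2''
      _ ≤ A.card + 1 := Finset.card_insert_le _ _
  have hdegy : G.minDegree ≤ B.card + 1 := by
    have h1' : G.minDegree ≤ G.degree y := G.minDegree_le_degree y
    have h2'' : G.neighborFinset y ⊆ insert x B := by
      intro w hw
      rw [mem_neighborFinset] at hw
      by_cases hwc : w ∈ c.support
      · exact Finset.mem_insert.mpr (Or.inr ((hmemB w).mpr ⟨hw, hwc⟩))
      · by_cases hwx : w = x
        · exact Finset.mem_insert.mpr (Or.inl hwx)
        · exfalso
          have hQ2 : (Walk.cons hw.symm P.reverse).IsPath := by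
            rw [Walk.isPath_def, Walk.support_cons, Walk.support_reverse, hPsupp]
            simp only [List.reverse_cons, List.reverse_nil, List.nil_append,
              List.singleton_append, List.nodup_cons, List.mem_cons, List.mem_singleton,
              List.not_mem_nil]
            refine ⟨by push_neg; exact ⟨hw.ne', hwx, trivial⟩, by simp [Ne.symm hxyne]⟩
          have hQ2av : ∀ v ∈ (Walk.cons hw.symm P.reverse).support, v ∉ c.support := by
            intro v hv
            rw [Walk.support_cons] at hv
            rcases List.mem_cons.mp hv with rfl | hv
            · exact hwc
            · exact hPrev_av v hv
          have := hP.2.2 w x (Walk.cons hw.symm P.reverse) hQ2 hQ2av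
          rw [Walk.length_cons, Walk.length_reverse, hp] at this
          omega
    calc G.minDegree ≤ G.degree y := h1'
      _ = (G.neighborFinset y).card := rfl
      _ ≤ (insert x B).card := Finset.card_le_card h2''
      _ ≤ B.card + 1 := Finset.card_insert_le _ _
  -- not both differences empty
  have hnotboth : (A \ B).Nonempty ∨ (B \ A).Nonempty := by
    by_contra h
    push_neg at h
    obtain ⟨ha', hb'⟩ := h
    rw [Finset.sdiff_eq_empty_iff_subset] at ha' hb'
    exact hne (Finset.Subset.antisymm ha' hb')
  -- card identities
  have hid1 : (A ∪ B).card + (A ∩ B).card = A.card + B.card :=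
    Finset.card_union_add_card_inter A B
  have hid2 : (A \ B).card + (A ∩ B).card = A.card := Finset.card_sdiff_add_card_inter A B
  have hid3 : (B \ A).card + (B ∩ A).card = B.card := Finset.card_sdiff_add_card_inter B A
  have hid4 : (B ∩ A).card = (A ∩ B).card := by rw [Finset.inter_comm]
  -- transfer indicators
  have hind1 : (A \ B).Nonempty → (if (SA \ SB).Nonempty then 1 else 0) = 1 := by
    intro h
    rw [if_pos]
    rw [← Finset.card_pos, hDabcard, Finset.card_pos]
    exact h
  have hind2 : (B \ A).Nonempty → (if (SB \ SA).Nonempty then 1 else 0) = 1 := by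
    intro h
    rw [if_pos]
    rw [← Finset.card_pos, hDbacard, Finset.card_pos]
    exact h
  rw [hUcard, hIcard] at hcount
  have hindge : ∀ (b : Prop) [Decidable b], (0:ℕ) ≤ if b then 1 else 0 := fun _ _ => Nat.zero_le _
  -- final arithmetic
  rcases hnotboth with hab | hba
  · have h1ind := hind1 hab
    have habpos : 0 < (A \ B).card := Finset.card_pos.mpr hab
    by_cases hba' : (B \ A).Nonempty
    · have h2ind := hind2 hba'
      have hbapos : 0 < (B \ A).card := Finset.card_pos.mpr hba'
      rw [h1ind, h2ind] at hcount
      rcases Nat.le_total ((A \ B).card) ((B \ A).card) with hm | hm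
      · rw [Nat.max_eq_right hm]
        omega
      · rw [Nat.max_eq_left hm]
        omega
    · have hba0 : (B \ A).card = 0 := by
        rw [Finset.card_eq_zero, ← Finset.not_nonempty_iff_eq_empty]
        exact hba'
      rw [h1ind] at hcount
      rw [Nat.max_eq_left (by omega)]
      omega
  · have h2ind := hind2 hba
    have hbapos : 0 < (B \ A).card := Finset.card_pos.mpr hba
    by_cases hab' : (A \ B).Nonempty
    · have h1ind := hind1 hab'
      have habpos : 0 < (A \ B).card := Finset.card_pos.mpr hab'
      rw [h1ind, h2ind] at hcount
      rcases Nat.le_total ((A \ B).card) ((B \ A).card) with hm | hm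
      · rw [Nat.max_eq_right hm]
        omega
      · rw [Nat.max_eq_left hm]
        omega
    · have hab0 : (A \ B).card = 0 := by
        rw [Finset.card_eq_zero, ← Finset.not_nonempty_iff_eq_empty]
        exact hab'
      rw [h2ind] at hcount
      rw [Nat.max_eq_right (by omega)]
      omega
end Paper
end

section
/- Let H ∈ 𝔉₁ (the class defined by identifying the x-vertices of three connected graphs H₁, H₂, H₃ and adding a triangle on y₁, y₂, y₃, with |V(H₁)| = |V(H₂)| = d+1, d+1 ≤ |V(H₃)| ≤ d+2, δ(H) = d ≥ 3). Then some longest cycle in H is not a dominating cycle; in fact no longest cycle of H is dominating. -/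
open SimpleGraph Finset

namespace Paper

variable {V : Type*}

section Aux

variable {V : Type*} {H : SimpleGraph V} {x : V} {A : Fin 3 → Set V} {y : Fin 3 → V}

/-- A vertex in two distinct parts is `x`. -/
lemma hone_aux (hA : ∀ i j, i ≠ j → A i ∩ A j = {x}) {v : V} {i j : Fin 3}
    (hij : i ≠ j) (h1 : v ∈ A i) (h2 : v ∈ A j) : v = x := by
  have : v ∈ A i ∩ A j := ⟨h1, h2⟩
  rwa [hA i j hij, Set.mem_singleton_iff] at this

/-- From an interior vertex of part `i`, every edge stays in part `i`. -/
lemma step_aux (hA : ∀ i j, i ≠ j → A i ∩ A j = {x})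
    (hy : ∀ i, y i ∈ A i ∧ y i ≠ x)
    (hEdge : ∀ a b : V, H.Adj a b → (∃ i, a ∈ A i ∧ b ∈ A i) ∨
      s(a, b) ∈ ({s(y 0, y 1), s(y 1, y 2), s(y 0, y 2)} : Set (Sym2 V)))
    {i : Fin 3} {a b : V} (hadj : H.Adj a b) (ha : a ∈ A i) (hax : a ≠ x)
    (hay : a ≠ y i) : b ∈ A i := by
  rcases hEdge a b hadj with ⟨j, haj, hbj⟩ | hT
  · by_cases hji : j = i
    · exact hji ▸ hbj
    · exact absurd (hone_aux hA hji haj ha) hax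
  · have hne : ∀ k : Fin 3, a ≠ y k := by
      intro k hk
      by_cases hki : k = i
      · exact hay (hki ▸ hk)
      · exact hax (hone_aux hA (fun h => hki h.symm) ha (hk ▸ (hy k).1))
    have haY : a = y 0 ∨ a = y 1 ∨ a = y 2 := by
      simp only [Set.mem_insert_iff, Set.mem_singleton_iff, Sym2.eq_iff] at hT
      tauto
    rcases haY with h | h | h <;> exact absurd h (hne _)

/-- Gate lemma: a walk avoiding `x` from inside part `i` to outside passes `y i`. -/
lemma gate_aux (hA : ∀ i j, i ≠ j → A i ∩ A j = {x})
    (hy : ∀ i, y i ∈ A i ∧ y i ≠ x)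
    (hEdge : ∀ a b : V, H.Adj a b → (∃ i, a ∈ A i ∧ b ∈ A i) ∨
      s(a, b) ∈ ({s(y 0, y 1), s(y 1, y 2), s(y 0, y 2)} : Set (Sym2 V)))
    (i : Fin 3) :
    ∀ {a b : V} (w : H.Walk a b), x ∉ w.support → a ∈ A i → b ∉ A i →
      y i ∈ w.support := by
  intro a b w
  induction w with
  | nil => intro _ ha hb; exact absurd ha hb
  | @cons u v w hadj p ih =>
    intro hx ha hb
    rw [SimpleGraph.Walk.support_cons] at hx ⊢
    have hux : u ≠ x := fun h => hx (h ▸ List.mem_cons_self)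
    by_cases huy : u = y i
    · exact List.mem_cons.mpr (Or.inl huy.symm)
    · have hv : v ∈ A i := step_aux hA hy hEdge hadj ha hux huy
      have hx' : x ∉ p.support := fun h => hx (List.mem_cons_of_mem _ h)
      exact List.mem_cons_of_mem _ (ih hx' hv hb)

/-- A path avoiding `x` cannot meet the interiors of all three parts. -/
lemma path_aux (hA : ∀ i j, i ≠ j → A i ∩ A j = {x})
    (hy : ∀ i, y i ∈ A i ∧ y i ≠ x)
    (hEdge : ∀ a b : V, H.Adj a b → (∃ i, a ∈ A i ∧ b ∈ A i) ∨
      s(a, b) ∈ ({s(y 0, y 1), s(y 1, y 2), s(y 0, y 2)} : Set (Sym2 V)))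
    [DecidableEq V]
    {a b : V} (r : H.Walk a b) (hnd : r.support.Nodup) (hxr : x ∉ r.support)
    (hits : ∀ j, ∃ z, z ∈ r.support ∧ z ∈ A j ∧ z ≠ x ∧ z ≠ y j) : False := by
  have hax : a ≠ x := fun h => hxr (h ▸ r.start_mem_support)
  have hbx : b ≠ x := fun h => hxr (h ▸ r.end_mem_support)
  have haA : ∀ i j : Fin 3, i ≠ j → a ∈ A i → a ∉ A j :=
    fun i j hij h1 h2 => hax (hone_aux hA hij h1 h2)
  have hbA : ∀ i j : Fin 3, i ≠ j → b ∈ A i → b ∉ A j :=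
    fun i j hij h1 h2 => hbx (hone_aux hA hij h1 h2)
  have key : ∃ j, a ∉ A j ∧ b ∉ A j := by
    by_cases a0 : a ∈ A 0
    · by_cases b1 : b ∈ A 1
      · exact ⟨2, haA 0 2 (by decide) a0, hbA 1 2 (by decide) b1⟩
      · exact ⟨1, haA 0 1 (by decide) a0, b1⟩
    · by_cases a1 : a ∈ A 1
      · by_cases b0 : b ∈ A 0
        · exact ⟨2, haA 1 2 (by decide) a1, hbA 0 2 (by decide) b0⟩
        · exact ⟨0, a0, b0⟩
      · by_cases b0 : b ∈ A 0
        · exact ⟨1, a1, hbA 0 1 (by decide) b0⟩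
        · exact ⟨0, a0, b0⟩
  obtain ⟨j, haj, hbj⟩ := key
  obtain ⟨z, hzs, hzA, hzx, hzy⟩ := hits j
  have hspec := r.take_spec hzs
  have hsup : (r.takeUntil z hzs).support ++ (r.dropUntil z hzs).support.tail
      = r.support := by
    rw [← SimpleGraph.Walk.support_append, hspec]
  have hnd' : ((r.takeUntil z hzs).support ++ (r.dropUntil z hzs).support.tail).Nodup := by
    rw [hsup]; exact hnd
  have hx1 : x ∉ (r.takeUntil z hzs).support := fun h => hxr (by
    rw [← hsup]; exact List.mem_append_left _ h)
  have hx2 : x ∉ (r.dropUntil z hzs).support := by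
    intro h
    rw [SimpleGraph.Walk.support_eq_cons] at h
    rcases List.mem_cons.mp h with h | h
    · exact hzx h.symm
    · exact hxr (by rw [← hsup]; exact List.mem_append_right _ h)
  have hy2 : y j ∈ (r.dropUntil z hzs).support :=
    gate_aux hA hy hEdge j _ hx2 hzA hbj
  have hy1 : y j ∈ (r.takeUntil z hzs).support := by
    have hx1' : x ∉ (r.takeUntil z hzs).reverse.support := by
      rw [SimpleGraph.Walk.support_reverse, List.mem_reverse]; exact hx1
    have := gate_aux hA hy hEdge j (r.takeUntil z hzs).reverse hx1' hzA haj
    rwa [SimpleGraph.Walk.support_reverse, List.mem_reverse] at this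
  have hy2t : y j ∈ (r.dropUntil z hzs).support.tail := by
    have := hy2
    rw [SimpleGraph.Walk.support_eq_cons] at this
    rcases List.mem_cons.mp this with h | h
    · exact absurd h.symm hzy
    · exact h
  exact (List.nodup_append'.mp hnd').2.2 hy1 hy2t

/-- No cycle meets the interiors of all three parts. -/
lemma cycle_aux (hA : ∀ i j, i ≠ j → A i ∩ A j = {x})
    (hy : ∀ i, y i ∈ A i ∧ y i ≠ x)
    (hEdge : ∀ a b : V, H.Adj a b → (∃ i, a ∈ A i ∧ b ∈ A i) ∨
      s(a, b) ∈ ({s(y 0, y 1), s(y 1, y 2), s(y 0, y 2)} : Set (Sym2 V)))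
    [DecidableEq V]
    {u : V} (c : H.Walk u u) (hc : c.IsCycle)
    (hits : ∀ j, ∃ z, z ∈ c.support ∧ z ∈ A j ∧ z ≠ x ∧ z ≠ y j) : False := by
  have closedtail : ∀ {u' : V} (p : H.Walk u' u'), ¬ p.Nil →
      ∀ v, v ∈ p.support → v ∈ p.support.tail := by
    intro u' p hp v hv
    obtain ⟨w, ha, q, rfl⟩ := SimpleGraph.Walk.not_nil_iff.mp hp
    rw [SimpleGraph.Walk.support_cons, List.tail_cons]
    rcases List.mem_cons.mp (by rwa [SimpleGraph.Walk.support_cons] at hv) with h | h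
    · exact h ▸ q.end_mem_support
    · exact h
  by_cases hxc : x ∈ c.support
  · have hc' := hc.rotate hxc
    have hrot := SimpleGraph.Walk.support_rotate c x hxc
    have hmem : ∀ v, v ∈ c.support → v ∈ (c.rotate x hxc).support := by
      intro v hv
      have : v ∈ c.support.tail := closedtail c hc.not_nil v hv
      have : v ∈ (c.rotate x hxc).support.tail := hrot.mem_iff.mpr this
      exact List.mem_of_mem_tail this
    obtain ⟨b, hadj, q, hq⟩ := SimpleGraph.Walk.not_nil_iff.mp hc'.not_nil
    have hqnd : q.support.Nodup := by
      have := hc'.support_nodup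
      rwa [hq, SimpleGraph.Walk.support_cons, List.tail_cons] at this
    have hbx : b ≠ x := hadj.ne'
    obtain ⟨w, hadj2, r, hr⟩ :=
      SimpleGraph.Walk.not_nil_iff.mp (SimpleGraph.Walk.not_nil_of_ne (fun h => hbx h.symm) : ¬ q.reverse.Nil)
    have hrevsup : q.reverse.support = x :: r.support := by
      rw [hr, SimpleGraph.Walk.support_cons]
    have hrevnd : (x :: r.support).Nodup := by
      rw [← hrevsup, SimpleGraph.Walk.support_reverse]
      exact List.nodup_reverse.mpr hqnd
    have hxr : x ∉ r.support := (List.nodup_cons.mp hrevnd).1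
    have hrnd : r.support.Nodup := (List.nodup_cons.mp hrevnd).2
    apply path_aux hA hy hEdge r hrnd hxr
    intro j
    obtain ⟨z, hzs, hz⟩ := hits j
    refine ⟨z, ?_, hz⟩
    have hzx : z ≠ x := hz.2.1
    have h1 : z ∈ (c.rotate x hxc).support := hmem z hzs
    rw [hq, SimpleGraph.Walk.support_cons] at h1
    have h2 : z ∈ q.support := by
      rcases List.mem_cons.mp h1 with h | h
      · exact absurd h hzx
      · exact h
    have h3 : z ∈ q.reverse.support := by
      rw [SimpleGraph.Walk.support_reverse, List.mem_reverse]; exact h2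
    rw [hrevsup] at h3
    rcases List.mem_cons.mp h3 with h | h
    · exact absurd h hzx
    · exact h
  · obtain ⟨b, hadj, q, hq⟩ := SimpleGraph.Walk.not_nil_iff.mp hc.not_nil
    have hqnd : q.support.Nodup := by
      have := hc.support_nodup
      rwa [hq, SimpleGraph.Walk.support_cons, List.tail_cons] at this
    have hxq : x ∉ q.support := by
      intro h
      exact hxc (by rw [hq, SimpleGraph.Walk.support_cons]; exact List.mem_cons_of_mem _ h)
    apply path_aux hA hy hEdge q hqnd hxq
    intro j
    obtain ⟨z, hzs, hz⟩ := hits j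
    refine ⟨z, ?_, hz⟩
    rw [hq, SimpleGraph.Walk.support_cons] at hzs
    rcases List.mem_cons.mp hzs with h | h
    · exact h ▸ q.end_mem_support
    · exact h

lemma edge_aux [Fintype V] [DecidableEq V] [DecidableRel H.Adj]
    (hA : ∀ i j, i ≠ j → A i ∩ A j = {x})
    (hy : ∀ i, y i ∈ A i ∧ y i ≠ x)
    (hEdge : ∀ a b : V, H.Adj a b → (∃ i, a ∈ A i ∧ b ∈ A i) ∨
      s(a, b) ∈ ({s(y 0, y 1), s(y 1, y 2), s(y 0, y 2)} : Set (Sym2 V)))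
    {i : Fin 3} (hcard : 4 ≤ (A i).ncard) (hdeg : ∀ v, 3 ≤ H.degree v) :
    ∃ a b, H.Adj a b ∧ (a ∈ A i ∧ a ≠ x ∧ a ≠ y i) ∧ (b ∈ A i ∧ b ≠ x ∧ b ≠ y i) := by
  have hne : (A i \ {x, y i}).Nonempty := by
    by_contra hcon
    rw [Set.not_nonempty_iff_eq_empty, Set.diff_eq_empty] at hcon
    have h1 := Set.ncard_le_ncard hcon (Set.toFinite _)
    have h2 : ({x, y i} : Set V).ncard ≤ 2 :=
      le_trans (Set.ncard_insert_le _ _) (by simp [Set.ncard_singleton])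
    omega
  obtain ⟨v, hvA, hnv⟩ := hne
  have hvx : v ≠ x := fun h => hnv (by simp [h])
  have hvy : v ≠ y i := fun h => hnv (by simp [h])
  have hW : ∃ w, H.Adj v w ∧ w ≠ x ∧ w ≠ y i := by
    by_contra hcon
    push_neg at hcon
    have hsub : H.neighborFinset v ⊆ {x, y i} := by
      intro w hw
      rw [SimpleGraph.mem_neighborFinset] at hw
      simp only [Finset.mem_insert, Finset.mem_singleton]
      by_cases hwx : w = x
      · exact Or.inl hwx
      · exact Or.inr (hcon w hw hwx)
    have h1 := Finset.card_le_card hsub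
    have h2 : ({x, y i} : Finset V).card ≤ 2 :=
      le_trans (Finset.card_insert_le _ _) (by simp)
    have h3 := hdeg v
    rw [← SimpleGraph.card_neighborFinset_eq_degree] at h3
    omega
  obtain ⟨w, hadj, hwx, hwy⟩ := hW
  exact ⟨v, w, hadj, ⟨hvA, hvx, hvy⟩,
    ⟨step_aux hA hy hEdge hadj hvA hvx hvy, hwx, hwy⟩⟩

end Aux

theorem stmt_9 [Fintype V] [DecidableEq V] (H : SimpleGraph V) [DecidableRel H.Adj]
    (d : ℕ) (h : InF1 H d) :
    (∃ (u : V) (c : H.Walk u u), IsLongestCycle c ∧ ¬ IsDominating c) ∧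
    ∀ (u : V) (c : H.Walk u u), IsLongestCycle c → ¬ IsDominating c := by

  obtain ⟨x, y₁, y₂, y₃, A, hA, -, hy1, hy2, hy3, hy1x, hy2x, hy3x, h12, h23, h13,
    hEdge0, -, hcA0, hcA1, hcA2, -, hmd, hd3⟩ := h
  set Y : Fin 3 → V := ![y₁, y₂, y₃] with hYdef
  have hy : ∀ i, Y i ∈ A i ∧ Y i ≠ x := by
    intro i
    fin_cases i
    · exact ⟨hy1, hy1x⟩
    · exact ⟨hy2, hy2x⟩
    · exact ⟨hy3, hy3x⟩
  have hEdge : ∀ a b : V, H.Adj a b → (∃ i, a ∈ A i ∧ b ∈ A i) ∨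
      s(a, b) ∈ ({s(Y 0, Y 1), s(Y 1, Y 2), s(Y 0, Y 2)} : Set (Sym2 V)) :=
    hEdge0
  have hdeg : ∀ v, 3 ≤ H.degree v := fun v => by
    have := H.minDegree_le_degree v; omega
  have hcard : ∀ i, 4 ≤ (A i).ncard := by
    intro i
    rw [← Nat.card_coe_set_eq]
    fin_cases i
    · show 4 ≤ Nat.card (A 0); omega
    · show 4 ≤ Nat.card (A 1); omega
    · show 4 ≤ Nat.card (A 2); omega
  have nondom : ∀ (u : V) (c : H.Walk u u), c.IsCycle → ¬ IsDominating c := by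
    intro u c hc hdom
    by_cases hall : ∀ j, ∃ z, z ∈ c.support ∧ z ∈ A j ∧ z ≠ x ∧ z ≠ Y j
    · exact cycle_aux hA hy hEdge c hc hall
    · push_neg at hall
      obtain ⟨j, hj⟩ := hall
      obtain ⟨a, b, hab, ⟨haA, hax, hay⟩, ⟨hbA, hbx, hby⟩⟩ :=
        edge_aux hA hy hEdge (hcard j) hdeg
      rcases hdom a b hab with hmem | hmem
      · exact hay (hj a hmem haA hax)
      · exact hby (hj b hmem hbA hbx)
  have n12 : y₁ ≠ y₂ := h12.ne
  have n23 : y₂ ≠ y₃ := h23.ne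
  have n13 : y₁ ≠ y₃ := h13.ne
  set t : H.Walk y₁ y₁ :=
    SimpleGraph.Walk.cons h12 (SimpleGraph.Walk.cons h23
      (SimpleGraph.Walk.cons h13.symm SimpleGraph.Walk.nil)) with htdef
  have ht : t.IsCycle := by
    rw [SimpleGraph.Walk.isCycle_def, SimpleGraph.Walk.isTrail_def]
    refine ⟨?_, by simp [htdef], ?_⟩
    · simp [htdef, Sym2.eq_iff]
      tauto
    · simp [htdef]
      tauto
  set S : Set ℕ := {n | ∃ (u : V) (c : H.Walk u u), c.IsCycle ∧ c.length = n}
    with hSdef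
  have hSne : S.Nonempty := ⟨t.length, y₁, t, ht, rfl⟩
  have hSbdd : BddAbove S := by
    refine ⟨Fintype.card V, ?_⟩
    rintro n ⟨u, c, hc, rfl⟩
    have h1 : c.support.tail.length ≤ Fintype.card V :=
      hc.support_nodup.length_le_card
    have h2 := c.length_support
    rw [SimpleGraph.Walk.support_eq_cons, List.length_cons] at h2
    omega
  obtain ⟨u0, c0, hc0c, hlen⟩ := Nat.sSup_mem hSne hSbdd
  have hlongest : IsLongestCycle c0 := by
    refine ⟨hc0c, fun v dw hd => ?_⟩
    have hmem : dw.length ∈ S := ⟨v, dw, hd, rfl⟩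
    have := le_csSup hSbdd hmem
    omega
  exact ⟨⟨u0, c0, hlongest, nondom u0 c0 hc0c⟩, fun u c hl => nondom u c hl.1⟩
end Paper
end
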